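/- arXiv:1310.5595 — 4 statements merged into one kernel-verified Lean document; each statement's English description precedes it below -/
import Mathlib

section
/- (Uniqueness of decomposition into irreducibles.) If T_1, …, T_n and S_1, …, S_k are irreducible tuples of complex matrices over the same index set Λ such that T_1 ⊕ ⋯ ⊕ T_n ≡ S_1 ⊕ ⋯ ⊕ S_k, then k = n and there exists a permutation τ of {1,…,n} such that S_j ≡ T_{τ(j)} for each j. -/
noncomputable section

/-- A tuple of complex matrices over an index set `Λ`: a family of `n × n` complex
matrices indexed by `Λ`, where `n ≥ 1` is the *degree* of the tuple. -/
structure MatTup (Λ : Type*) where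
  deg : ℕ
  deg_pos : 0 < deg
  mat : Λ → Matrix (Fin deg) (Fin deg) ℂ

namespace MatTup

variable {Λ : Type*}

/-- The unitary action `U.X = (U Xₗ U⁻¹)ₗ`. -/
def act (X : MatTup Λ) (U : Matrix (Fin X.deg) (Fin X.deg) ℂ) : MatTup Λ :=
  ⟨X.deg, X.deg_pos, fun l => U * X.mat l * U⁻¹⟩

/-- Direct sum `X ⊕ Y`, the tuple of block-diagonal matrices. -/
def dsum (X Y : MatTup Λ) : MatTup Λ :=
  ⟨X.deg + Y.deg, Nat.add_pos_left X.deg_pos _, fun l =>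
    Matrix.reindex finSumFinEquiv finSumFinEquiv (Matrix.fromBlocks (X.mat l) 0 0 (Y.mat l))⟩

/-- Unitary equivalence `X ≡ Y`: the degrees agree and some unitary `U` satisfies `U.X = Y`. -/
def UEquiv (X Y : MatTup Λ) : Prop :=
  ∃ U ∈ Matrix.unitaryGroup (Fin X.deg) ℂ, X.act U = Y

/-- `X ≼ Y`: either `X ≡ Y`, or there are `A`, `B` with `X ≡ A` and `Y ≡ A ⊕ B`. -/
def Sub (X Y : MatTup Λ) : Prop :=
  X.UEquiv Y ∨ ∃ A B : MatTup Λ, X.UEquiv A ∧ Y.UEquiv (A.dsum B)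

/-- Disjointness `X ⊥ Y`: no tuple `A` satisfies both `A ≼ X` and `A ≼ Y`. -/
def Disj (X Y : MatTup Λ) : Prop :=
  ¬∃ A : MatTup Λ, A.Sub X ∧ A.Sub Y

/-- `X` is irreducible if no unitary `V` satisfies `V.X = A ⊕ B` for tuples `A`, `B`. -/
def Irred (X : MatTup Λ) : Prop :=
  ¬∃ (A B : MatTup Λ) (V : Matrix (Fin X.deg) (Fin X.deg) ℂ),
      V ∈ Matrix.unitaryGroup (Fin X.deg) ℂ ∧ X.act V = A.dsum B

/-- The stabilizer of `X`: all unitaries `U` with `U.X = X`. -/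
def stab (X : MatTup Λ) : Set (Matrix (Fin X.deg) (Fin X.deg) ℂ) :=
  {U | U ∈ Matrix.unitaryGroup (Fin X.deg) ℂ ∧ X.act U = X}

/-- The direct sum `T 0 ⊕ T 1 ⊕ ⋯` of a nonempty finite family of tuples
(associated to the left). -/
def bigDsum : {k : ℕ} → (Fin k → MatTup Λ) → 0 < k → MatTup Λ
  | 0, _, h => absurd h (lt_irrefl 0)
  | 1, T, _ => T 0
  | k + 2, T, _ =>
      (bigDsum (fun j : Fin (k + 1) => T j.castSucc) k.succ_pos).dsum (T (Fin.last (k + 1)))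

end MatTup
namespace MatTup

open Matrix

set_option maxHeartbeats 1000000

variable {Λ : Type*}

/-! ### Basic lemmas -/

private lemma mk_eq {n : ℕ} {p q : 0 < n} {f g : Λ → Matrix (Fin n) (Fin n) ℂ}
    (h : ∀ l, f l = g l) : (⟨n, p, f⟩ : MatTup Λ) = ⟨n, q, g⟩ := by
  cases funext h; rfl

private lemma mk_eq_cast {n m : ℕ} {pn : 0 < n} {pm : 0 < m}
    {f : Λ → Matrix (Fin n) (Fin n) ℂ} {g : Λ → Matrix (Fin m) (Fin m) ℂ} (h : n = m)
    (h2 : ∀ l i j, f l i j = g l (Fin.cast h i) (Fin.cast h j)) :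
    (⟨n, pn, f⟩ : MatTup Λ) = ⟨m, pm, g⟩ := by
  subst h
  exact mk_eq fun l => by funext i j; exact h2 l i j

private lemma act_mk {n : ℕ} {pn : 0 < n} {f : Λ → Matrix (Fin n) (Fin n) ℂ}
    (U : Matrix (Fin n) (Fin n) ℂ) :
    (⟨n, pn, f⟩ : MatTup Λ).act U = ⟨n, pn, fun l => U * f l * U⁻¹⟩ := rfl

private lemma dsum_mk {n m : ℕ} {pn : 0 < n} {pm : 0 < m}
    {f : Λ → Matrix (Fin n) (Fin n) ℂ} {g : Λ → Matrix (Fin m) (Fin m) ℂ} :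
    (⟨n, pn, f⟩ : MatTup Λ).dsum ⟨m, pm, g⟩ =
      ⟨n + m, Nat.add_pos_left pn m, fun l =>
        Matrix.reindex finSumFinEquiv finSumFinEquiv (Matrix.fromBlocks (f l) 0 0 (g l))⟩ := rfl

private lemma u_mul_star {d : ℕ} {U : Matrix (Fin d) (Fin d) ℂ}
    (hU : U ∈ Matrix.unitaryGroup (Fin d) ℂ) : U * Uᴴ = 1 := by
  have := Matrix.mem_unitaryGroup_iff.mp hU
  rwa [Matrix.star_eq_conjTranspose] at this

private lemma u_star_mul {d : ℕ} {U : Matrix (Fin d) (Fin d) ℂ}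
    (hU : U ∈ Matrix.unitaryGroup (Fin d) ℂ) : Uᴴ * U = 1 := by
  have := Matrix.mem_unitaryGroup_iff'.mp hU
  rwa [Matrix.star_eq_conjTranspose] at this

private lemma u_inv {d : ℕ} {U : Matrix (Fin d) (Fin d) ℂ}
    (hU : U ∈ Matrix.unitaryGroup (Fin d) ℂ) : U⁻¹ = Uᴴ :=
  Matrix.inv_eq_right_inv (u_mul_star hU)

private lemma star_mem' {d : ℕ} {U : Matrix (Fin d) (Fin d) ℂ}
    (hU : U ∈ Matrix.unitaryGroup (Fin d) ℂ) : Uᴴ ∈ Matrix.unitaryGroup (Fin d) ℂ := by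
  rw [Matrix.mem_unitaryGroup_iff, Matrix.star_eq_conjTranspose,
    Matrix.conjTranspose_conjTranspose]
  exact u_star_mul hU

private lemma cancel₁ {d k : ℕ} {U : Matrix (Fin d) (Fin d) ℂ}
    (hU : U ∈ Matrix.unitaryGroup (Fin d) ℂ) (Z : Matrix (Fin d) (Fin k) ℂ) :
    Uᴴ * (U * Z) = Z := by
  rw [← Matrix.mul_assoc, u_star_mul hU, Matrix.one_mul]

private lemma cancel₂ {d k : ℕ} {U : Matrix (Fin d) (Fin d) ℂ}
    (hU : U ∈ Matrix.unitaryGroup (Fin d) ℂ) (Z : Matrix (Fin d) (Fin k) ℂ) :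
    U * (Uᴴ * Z) = Z := by
  rw [← Matrix.mul_assoc, u_mul_star hU, Matrix.one_mul]

lemma act_one (X : MatTup Λ) : X.act 1 = X :=
  mk_eq fun l => by simp [inv_one]

lemma act_act (X : MatTup Λ) (U V : Matrix (Fin X.deg) (Fin X.deg) ℂ) :
    (X.act U).act V = X.act (V * U) := by
  refine mk_eq fun l => ?_
  show V * (U * X.mat l * U⁻¹) * V⁻¹ = (V * U) * X.mat l * (V * U)⁻¹
  rw [Matrix.mul_inv_rev]
  simp only [Matrix.mul_assoc]

lemma uequiv_refl (X : MatTup Λ) : X.UEquiv X := ⟨1, one_mem _, act_one X⟩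

lemma uequiv_symm {X Y : MatTup Λ} (h : X.UEquiv Y) : Y.UEquiv X := by
  obtain ⟨U, hU, rfl⟩ := h
  exact ⟨Uᴴ, star_mem' hU, (act_act X U Uᴴ).trans (by rw [u_star_mul hU, act_one])⟩

lemma uequiv_trans {X Y Z : MatTup Λ} (h : X.UEquiv Y) (h' : Y.UEquiv Z) : X.UEquiv Z := by
  obtain ⟨U, hU, rfl⟩ := h
  obtain ⟨V, hV, hYZ⟩ := h'
  refine ⟨(show Matrix (Fin X.deg) (Fin X.deg) ℂ from V) * U,
    mul_mem (show V ∈ Matrix.unitaryGroup (Fin X.deg) ℂ from hV) hU, ?_⟩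
  rw [← act_act]
  exact hYZ

def ueSetoid : Setoid (MatTup Λ) := ⟨UEquiv, ⟨uequiv_refl, fun h => uequiv_symm h,
  fun h h' => uequiv_trans h h'⟩⟩

private lemma uequiv_deg {X Y : MatTup Λ} (h : X.UEquiv Y) : X.deg = Y.deg := by
  obtain ⟨U, hU, hXY⟩ := h
  have h2 := congrArg deg hXY
  exact h2

private lemma uequiv_elim {n : ℕ} {pn pm : 0 < n} {f g : Λ → Matrix (Fin n) (Fin n) ℂ}
    (h : UEquiv (⟨n, pn, f⟩ : MatTup Λ) ⟨n, pm, g⟩) :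
    ∃ U ∈ Matrix.unitaryGroup (Fin n) ℂ, ∀ l, U * f l * U⁻¹ = g l := by
  obtain ⟨U, hU, hXY⟩ := h
  refine ⟨U, hU, fun l => ?_⟩
  have h2 : (MatTup.mk n pn fun l => U * f l * U⁻¹) = ⟨n, pm, g⟩ := hXY
  rw [mk.injEq] at h2
  exact congrFun (heq_iff_eq.mp h2.2) l

private lemma uequiv_intro {n : ℕ} {pn pm : 0 < n} {f g : Λ → Matrix (Fin n) (Fin n) ℂ}
    (U : Matrix (Fin n) (Fin n) ℂ) (hU : U ∈ Matrix.unitaryGroup (Fin n) ℂ)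
    (h : ∀ l, U * f l * U⁻¹ = g l) :
    UEquiv (⟨n, pn, f⟩ : MatTup Λ) ⟨n, pm, g⟩ :=
  ⟨U, hU, mk_eq h⟩

lemma irred_act {X : MatTup Λ} {U : Matrix (Fin X.deg) (Fin X.deg) ℂ}
    (hU : U ∈ Matrix.unitaryGroup (Fin X.deg) ℂ) (h : X.Irred) : (X.act U).Irred := by
  rintro ⟨A, B, V, hV, hact⟩
  refine h ⟨A, B, (show Matrix (Fin X.deg) (Fin X.deg) ℂ from V) * U,
    mul_mem (show V ∈ Matrix.unitaryGroup (Fin X.deg) ℂ from hV) hU, ?_⟩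
  rw [← act_act]
  exact hact

/-! ### Intertwiner spaces -/

private lemma mat_mk {n : ℕ} {pn : 0 < n} (f : Λ → Matrix (Fin n) (Fin n) ℂ) :
    (⟨n, pn, f⟩ : MatTup Λ).mat = f := rfl

def homS (X Y : MatTup Λ) : Submodule ℂ (Matrix (Fin Y.deg) (Fin X.deg) ℂ) where
  carrier := {M | ∀ l, M * X.mat l = Y.mat l * M ∧ M * (X.mat l)ᴴ = (Y.mat l)ᴴ * M}
  add_mem' := by
    intro M N hM hN l
    exact ⟨by rw [Matrix.add_mul, Matrix.mul_add, (hM l).1, (hN l).1],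
           by rw [Matrix.add_mul, Matrix.mul_add, (hM l).2, (hN l).2]⟩
  zero_mem' := fun l => by simp
  smul_mem' := by
    intro c M hM l
    exact ⟨by rw [Matrix.smul_mul, Matrix.mul_smul, (hM l).1],
           by rw [Matrix.smul_mul, Matrix.mul_smul, (hM l).2]⟩

lemma mem_homS {X Y : MatTup Λ} {M : Matrix (Fin Y.deg) (Fin X.deg) ℂ} :
    M ∈ homS X Y ↔ ∀ l, M * X.mat l = Y.mat l * M ∧ M * (X.mat l)ᴴ = (Y.mat l)ᴴ * M :=
  Iff.rfl

lemma homS_star {X Y : MatTup Λ} {M : Matrix (Fin Y.deg) (Fin X.deg) ℂ}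
    (hM : M ∈ homS X Y) : Mᴴ ∈ homS Y X := by
  rw [mem_homS] at hM ⊢
  intro l
  constructor
  · have := congrArg Matrix.conjTranspose (hM l).2
    simpa [Matrix.conjTranspose_mul] using this.symm
  · have := congrArg Matrix.conjTranspose (hM l).1
    simpa [Matrix.conjTranspose_mul] using this.symm

lemma homS_mul {X Y Z : MatTup Λ} {M : Matrix (Fin Z.deg) (Fin Y.deg) ℂ}
    {N : Matrix (Fin Y.deg) (Fin X.deg) ℂ}
    (hM : M ∈ homS Y Z) (hN : N ∈ homS X Y) : M * N ∈ homS X Z := by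
  rw [mem_homS] at hM hN ⊢
  intro l
  constructor
  · rw [Matrix.mul_assoc, (hN l).1, ← Matrix.mul_assoc, (hM l).1, Matrix.mul_assoc]
  · rw [Matrix.mul_assoc, (hN l).2, ← Matrix.mul_assoc, (hM l).2, Matrix.mul_assoc]

private lemma hom_of_conj {n : ℕ} {pn pm : 0 < n} {f g : Λ → Matrix (Fin n) (Fin n) ℂ}
    {U : Matrix (Fin n) (Fin n) ℂ} (hU : U ∈ Matrix.unitaryGroup (Fin n) ℂ)
    (hUf : ∀ l, U * f l * U⁻¹ = g l) :
    U ∈ homS (⟨n, pn, f⟩ : MatTup Λ) ⟨n, pm, g⟩ := by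
  rw [mem_homS]
  intro l
  constructor
  · show U * f l = g l * U
    rw [← hUf l, u_inv hU, Matrix.mul_assoc (U * f l) Uᴴ U, u_star_mul hU, Matrix.mul_one]
  · show U * (f l)ᴴ = (g l)ᴴ * U
    rw [← hUf l, u_inv hU]
    simp only [Matrix.conjTranspose_mul, Matrix.conjTranspose_conjTranspose]
    simp only [Matrix.mul_assoc]
    rw [u_star_mul hU, Matrix.mul_one]

def hdim (X Y : MatTup Λ) : ℕ := Module.finrank ℂ (homS X Y)

private def mulLeftEquiv {a n : ℕ} (U : Matrix (Fin n) (Fin n) ℂ)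
    (hU : U ∈ Matrix.unitaryGroup (Fin n) ℂ) :
    Matrix (Fin n) (Fin a) ℂ ≃ₗ[ℂ] Matrix (Fin n) (Fin a) ℂ where
  toFun M := U * M
  map_add' M N := Matrix.mul_add U M N
  map_smul' c M := by simp [Matrix.mul_smul]
  invFun M := Uᴴ * M
  left_inv M := cancel₁ hU M
  right_inv M := cancel₂ hU M

lemma hdim_congr_right (A : MatTup Λ) {Y Z : MatTup Λ} (h : Y.UEquiv Z) :
    hdim A Y = hdim A Z := by
  obtain ⟨n, pn, f⟩ := Y
  obtain ⟨m, pm, g⟩ := Z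
  have hd : n = m := uequiv_deg h
  subst hd
  obtain ⟨U, hU, hUf⟩ := uequiv_elim h
  have hmap : homS A (⟨n, pm, g⟩ : MatTup Λ)
      = (homS A (⟨n, pn, f⟩ : MatTup Λ)).map (mulLeftEquiv (a := A.deg) U hU).toLinearMap := by
    ext M
    simp only [Submodule.mem_map]
    constructor
    · intro hM
      refine ⟨Uᴴ * M, ?_, ?_⟩
      · rw [mem_homS] at hM ⊢
        simp only [mat_mk] at hM ⊢
        intro l
        constructor
        · show Uᴴ * M * A.mat l = f l * (Uᴴ * M)
          rw [Matrix.mul_assoc, (hM l).1, ← hUf l, u_inv hU]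
          simp only [Matrix.mul_assoc]
          rw [cancel₁ hU]
        · show Uᴴ * M * (A.mat l)ᴴ = (f l)ᴴ * (Uᴴ * M)
          rw [Matrix.mul_assoc, (hM l).2, ← hUf l, u_inv hU]
          simp only [Matrix.conjTranspose_mul, Matrix.conjTranspose_conjTranspose]
          simp only [Matrix.mul_assoc]
          rw [cancel₁ hU]
      · show U * (Uᴴ * M) = M
        exact cancel₂ hU M
    · rintro ⟨N, hN, rfl⟩
      show U * N ∈ _
      rw [mem_homS] at hN ⊢
      simp only [mat_mk] at hN ⊢
      intro l
      constructor
      · show U * N * A.mat l = g l * (U * N)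
        rw [Matrix.mul_assoc, (hN l).1, ← hUf l, u_inv hU]
        simp only [Matrix.mul_assoc]
        rw [cancel₁ hU]
      · show U * N * (A.mat l)ᴴ = (g l)ᴴ * (U * N)
        rw [Matrix.mul_assoc, (hN l).2, ← hUf l, u_inv hU]
        simp only [Matrix.conjTranspose_mul, Matrix.conjTranspose_conjTranspose]
        simp only [Matrix.mul_assoc]
        rw [cancel₁ hU]
  rw [hdim, hdim, hmap, LinearEquiv.finrank_map_eq]

/-! ### Additivity over direct sums -/

private def pick1 {a n m : ℕ} (M : Matrix (Fin (n + m)) (Fin a) ℂ) : Matrix (Fin n) (Fin a) ℂ :=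
  Matrix.of fun i j => M (finSumFinEquiv (Sum.inl i)) j

private def pick2 {a n m : ℕ} (M : Matrix (Fin (n + m)) (Fin a) ℂ) : Matrix (Fin m) (Fin a) ℂ :=
  Matrix.of fun i j => M (finSumFinEquiv (Sum.inr i)) j

private def glue {a n m : ℕ} (M₁ : Matrix (Fin n) (Fin a) ℂ) (M₂ : Matrix (Fin m) (Fin a) ℂ) :
    Matrix (Fin (n + m)) (Fin a) ℂ :=
  Matrix.of fun r j => Sum.elim (fun i => M₁ i j) (fun i => M₂ i j) (finSumFinEquiv.symm r)

private lemma pick1_glue {a n m : ℕ} (M₁ : Matrix (Fin n) (Fin a) ℂ)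
    (M₂ : Matrix (Fin m) (Fin a) ℂ) : pick1 (glue M₁ M₂) = M₁ := by
  ext i j; simp [pick1, glue]

private lemma pick2_glue {a n m : ℕ} (M₁ : Matrix (Fin n) (Fin a) ℂ)
    (M₂ : Matrix (Fin m) (Fin a) ℂ) : pick2 (glue M₁ M₂) = M₂ := by
  ext i j; simp [pick2, glue]

private lemma glue_pick {a n m : ℕ} (M : Matrix (Fin (n + m)) (Fin a) ℂ) :
    glue (pick1 M) (pick2 M) = M := by
  ext r j
  obtain ⟨s, rfl⟩ := finSumFinEquiv.surjective r
  cases s <;> simp [pick1, pick2, glue]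

private lemma glue_inl {a n m : ℕ} (M₁ : Matrix (Fin n) (Fin a) ℂ)
    (M₂ : Matrix (Fin m) (Fin a) ℂ) (i : Fin n) (j : Fin a) :
    glue M₁ M₂ (finSumFinEquiv (Sum.inl i)) j = M₁ i j := by
  simp [glue]

private lemma glue_inr {a n m : ℕ} (M₁ : Matrix (Fin n) (Fin a) ℂ)
    (M₂ : Matrix (Fin m) (Fin a) ℂ) (i : Fin m) (j : Fin a) :
    glue M₁ M₂ (finSumFinEquiv (Sum.inr i)) j = M₂ i j := by
  simp [glue]

private lemma pick1_mul_right {a n m : ℕ} (M : Matrix (Fin (n + m)) (Fin a) ℂ)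
    (C : Matrix (Fin a) (Fin a) ℂ) : pick1 (M * C) = pick1 M * C := by
  ext i j; simp [pick1, Matrix.mul_apply]

private lemma pick2_mul_right {a n m : ℕ} (M : Matrix (Fin (n + m)) (Fin a) ℂ)
    (C : Matrix (Fin a) (Fin a) ℂ) : pick2 (M * C) = pick2 M * C := by
  ext i j; simp [pick2, Matrix.mul_apply]

private lemma blockMul {a n m : ℕ} (P : Matrix (Fin n) (Fin n) ℂ) (Q : Matrix (Fin m) (Fin m) ℂ)
    (M : Matrix (Fin (n + m)) (Fin a) ℂ) :
    (Matrix.reindex finSumFinEquiv finSumFinEquiv (Matrix.fromBlocks P 0 0 Q)) * M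
      = glue (P * pick1 M) (Q * pick2 M) := by
  ext r j
  obtain ⟨s, rfl⟩ := finSumFinEquiv.surjective r
  rw [Matrix.mul_apply]
  rw [show (∑ k, (Matrix.reindex finSumFinEquiv finSumFinEquiv (Matrix.fromBlocks P 0 0 Q))
        (finSumFinEquiv s) k * M k j)
      = ∑ t, (Matrix.reindex finSumFinEquiv finSumFinEquiv (Matrix.fromBlocks P 0 0 Q))
        (finSumFinEquiv s) (finSumFinEquiv t) * M (finSumFinEquiv t) j
    from (Equiv.sum_comp finSumFinEquiv _).symm]
  simp only [Matrix.reindex_apply, Matrix.submatrix_apply, Equiv.symm_apply_apply]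
  rw [Fintype.sum_sum_type]
  cases s with
  | inl i =>
    rw [glue_inl]
    simp only [Matrix.fromBlocks_apply₁₁, Matrix.fromBlocks_apply₁₂, Matrix.zero_apply,
      zero_mul, Finset.sum_const_zero, add_zero]
    rw [Matrix.mul_apply]
    simp [pick1]
  | inr i =>
    rw [glue_inr]
    simp only [Matrix.fromBlocks_apply₂₁, Matrix.fromBlocks_apply₂₂, Matrix.zero_apply,
      zero_mul, Finset.sum_const_zero, zero_add]
    rw [Matrix.mul_apply]
    simp [pick2]

private lemma blockCT {n m : ℕ} (P : Matrix (Fin n) (Fin n) ℂ) (Q : Matrix (Fin m) (Fin m) ℂ) :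
    (Matrix.reindex finSumFinEquiv finSumFinEquiv (Matrix.fromBlocks P 0 0 Q))ᴴ
      = Matrix.reindex finSumFinEquiv finSumFinEquiv (Matrix.fromBlocks Pᴴ 0 0 Qᴴ) := by
  simp [Matrix.reindex_apply, Matrix.conjTranspose_submatrix, Matrix.fromBlocks_conjTranspose]

private lemma mem_homS_block {a n m : ℕ} {pa : 0 < a} {pn : 0 < n} {pm : 0 < m}
    {pnm : 0 < n + m} {fA : Λ → Matrix (Fin a) (Fin a) ℂ}
    {f : Λ → Matrix (Fin n) (Fin n) ℂ} {g : Λ → Matrix (Fin m) (Fin m) ℂ}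
    (M : Matrix (Fin (n + m)) (Fin a) ℂ) :
    M ∈ homS (⟨a, pa, fA⟩ : MatTup Λ) ⟨n + m, pnm, fun l =>
        Matrix.reindex finSumFinEquiv finSumFinEquiv (Matrix.fromBlocks (f l) 0 0 (g l))⟩
      ↔ pick1 M ∈ homS (⟨a, pa, fA⟩ : MatTup Λ) ⟨n, pn, f⟩
        ∧ pick2 M ∈ homS (⟨a, pa, fA⟩ : MatTup Λ) ⟨m, pm, g⟩ := by
  simp only [mem_homS, mat_mk]
  constructor
  · intro hM
    refine ⟨fun l => ?_, fun l => ?_⟩ <;> obtain ⟨h1, h2⟩ := hM l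
    · constructor
      · have h3 := congrArg pick1 h1
        rwa [pick1_mul_right, blockMul, pick1_glue] at h3
      · have h3 := congrArg pick1 h2
        rwa [pick1_mul_right, blockCT, blockMul, pick1_glue] at h3
    · constructor
      · have h3 := congrArg pick2 h1
        rwa [pick2_mul_right, blockMul, pick2_glue] at h3
      · have h3 := congrArg pick2 h2
        rwa [pick2_mul_right, blockCT, blockMul, pick2_glue] at h3
  · rintro ⟨hX, hY⟩ l
    constructor
    · rw [blockMul, ← (hX l).1, ← (hY l).1, ← pick1_mul_right, ← pick2_mul_right, glue_pick]
    · rw [blockCT, blockMul, ← (hX l).2, ← (hY l).2, ← pick1_mul_right, ← pick2_mul_right,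
        glue_pick]

private lemma glue_add {a n m : ℕ} (M₁ N₁ : Matrix (Fin n) (Fin a) ℂ)
    (M₂ N₂ : Matrix (Fin m) (Fin a) ℂ) :
    glue (M₁ + N₁) (M₂ + N₂) = glue M₁ M₂ + glue N₁ N₂ := by
  ext r j
  obtain ⟨s, rfl⟩ := finSumFinEquiv.surjective r
  cases s <;> simp [glue]

private lemma glue_smul {a n m : ℕ} (c : ℂ) (M₁ : Matrix (Fin n) (Fin a) ℂ)
    (M₂ : Matrix (Fin m) (Fin a) ℂ) :
    glue (c • M₁) (c • M₂) = c • glue M₁ M₂ := by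
  ext r j
  obtain ⟨s, rfl⟩ := finSumFinEquiv.surjective r
  cases s <;> simp [glue]

private def dsumHomEquiv {a n m : ℕ} (pa : 0 < a) (pn : 0 < n) (pm : 0 < m) (pnm : 0 < n + m)
    (fA : Λ → Matrix (Fin a) (Fin a) ℂ) (f : Λ → Matrix (Fin n) (Fin n) ℂ)
    (g : Λ → Matrix (Fin m) (Fin m) ℂ) :
    (homS (⟨a, pa, fA⟩ : MatTup Λ) ⟨n + m, pnm, fun l =>
        Matrix.reindex finSumFinEquiv finSumFinEquiv (Matrix.fromBlocks (f l) 0 0 (g l))⟩)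
      ≃ₗ[ℂ] (homS (⟨a, pa, fA⟩ : MatTup Λ) ⟨n, pn, f⟩)
              × (homS (⟨a, pa, fA⟩ : MatTup Λ) ⟨m, pm, g⟩) where
  toFun M := (⟨pick1 M.1, ((mem_homS_block (pn := pn) (pm := pm) M.1).mp M.2).1⟩,
              ⟨pick2 M.1, ((mem_homS_block (pn := pn) (pm := pm) M.1).mp M.2).2⟩)
  map_add' M N := by
    refine Prod.ext (Subtype.ext ?_) (Subtype.ext ?_) <;> (ext i j; simp [pick1, pick2]; rfl)
  map_smul' c M := by
    refine Prod.ext (Subtype.ext ?_) (Subtype.ext ?_) <;> (ext i j; simp [pick1, pick2]; rfl)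
  invFun p := ⟨glue p.1.1 p.2.1, (mem_homS_block _).mpr
    ⟨by rw [pick1_glue]; exact p.1.2, by rw [pick2_glue]; exact p.2.2⟩⟩
  left_inv M := Subtype.ext (glue_pick M.1)
  right_inv p := by
    refine Prod.ext (Subtype.ext ?_) (Subtype.ext ?_)
    · exact pick1_glue _ _
    · exact pick2_glue _ _

lemma hdim_dsum (A X Y : MatTup Λ) : hdim A (X.dsum Y) = hdim A X + hdim A Y := by
  obtain ⟨a, pa, fA⟩ := A
  obtain ⟨n, pn, f⟩ := X
  obtain ⟨m, pm, g⟩ := Y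
  rw [dsum_mk]
  rw [hdim, hdim, hdim,
    LinearEquiv.finrank_eq (dsumHomEquiv pa pn pm (Nat.add_pos_left pn m) fA f g),
    Module.finrank_prod]

/-! ### Block reduction and Schur's lemma -/

private lemma reducible_of_invariant {n : ℕ} {pn : 0 < n} {f : Λ → Matrix (Fin n) (Fin n) ℂ}
    (p : Fin n → Prop) [DecidablePred p] (h0 : ∃ i, p i) (h1 : ∃ i, ¬ p i)
    (hz : ∀ l i j, p i → ¬ p j → f l i j = 0)
    (hz' : ∀ l i j, ¬ p i → p j → f l i j = 0) :
    ∃ (A B : MatTup Λ) (V : Matrix (Fin n) (Fin n) ℂ),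
      V ∈ Matrix.unitaryGroup (Fin n) ℂ ∧ (⟨n, pn, f⟩ : MatTup Λ).act V = A.dsum B := by
  classical
  set a := Fintype.card {i // p i} with ha_def
  set b := Fintype.card {i // ¬ p i} with hb_def
  have ha : 0 < a := Fintype.card_pos_iff.mpr ⟨⟨h0.choose, h0.choose_spec⟩⟩
  have hb : 0 < b := Fintype.card_pos_iff.mpr ⟨⟨h1.choose, h1.choose_spec⟩⟩
  let u : (Fin a ⊕ Fin b) ≃ Fin n :=
    (Equiv.sumCongr (Fintype.equivFin {i // p i}).symm
      (Fintype.equivFin {i // ¬ p i}).symm).trans (Equiv.sumCompl p)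
  have hu1 : ∀ i, p (u (Sum.inl i)) := fun i => by
    simp only [u, Equiv.trans_apply, Equiv.sumCongr_apply, Sum.map_inl,
      Equiv.sumCompl_apply_inl]
    exact ((Fintype.equivFin {i // p i}).symm i).2
  have hu2 : ∀ i, ¬ p (u (Sum.inr i)) := fun i => by
    simp only [u, Equiv.trans_apply, Equiv.sumCongr_apply, Sum.map_inr,
      Equiv.sumCompl_apply_inr]
    exact ((Fintype.equivFin {i // ¬ p i}).symm i).2
  have hab : a + b = n := by
    have hcc := Fintype.card_congr u
    simpa using hcc
  let w : Fin n ≃ Fin n := ((finCongr hab.symm).trans finSumFinEquiv.symm).trans u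
  let V : Matrix (Fin n) (Fin n) ℂ := (1 : Matrix (Fin n) (Fin n) ℂ).submatrix ⇑w _root_.id
  have hVT : Vᴴ = (1 : Matrix (Fin n) (Fin n) ℂ).submatrix _root_.id ⇑w := by
    simp [V, Matrix.conjTranspose_submatrix]
  have hVmem : V ∈ Matrix.unitaryGroup (Fin n) ℂ := by
    rw [Matrix.mem_unitaryGroup_iff', Matrix.star_eq_conjTranspose, hVT]
    have h2 := Matrix.submatrix_mul_equiv (1 : Matrix (Fin n) (Fin n) ℂ)
      (1 : Matrix (Fin n) (Fin n) ℂ) _root_.id w _root_.id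
    rw [Matrix.one_mul, Matrix.submatrix_id_id] at h2
    exact h2
  have hV1 : ∀ N : Matrix (Fin n) (Fin n) ℂ, V * N = N.submatrix ⇑w _root_.id := by
    intro N
    have h2 := Matrix.submatrix_mul_equiv (1 : Matrix (Fin n) (Fin n) ℂ) N ⇑w
      (Equiv.refl (Fin n)) _root_.id
    simpa [V] using h2
  have hV2 : ∀ N : Matrix (Fin n) (Fin n) ℂ, N * Vᴴ = N.submatrix _root_.id ⇑w := by
    intro N
    rw [hVT]
    have h2 := Matrix.submatrix_mul_equiv N (1 : Matrix (Fin n) (Fin n) ℂ) _root_.id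
      (Equiv.refl (Fin n)) ⇑w
    simpa using h2
  have hVM : ∀ N : Matrix (Fin n) (Fin n) ℂ, V * N * Vᴴ = N.submatrix ⇑w ⇑w := by
    intro N
    rw [hV1, hV2, Matrix.submatrix_submatrix]
    rfl
  have hw : ∀ i : Fin n, w i = u (finSumFinEquiv.symm (Fin.cast hab.symm i)) := fun i => by
    simp [w, Equiv.trans_apply, finCongr_apply]
  refine ⟨⟨a, ha, fun l => Matrix.of fun i j => f l (u (Sum.inl i)) (u (Sum.inl j))⟩,
          ⟨b, hb, fun l => Matrix.of fun i j => f l (u (Sum.inr i)) (u (Sum.inr j))⟩,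
          V, hVmem, ?_⟩
  rw [act_mk, dsum_mk]
  refine mk_eq_cast hab.symm fun l i j => ?_
  show (V * f l * V⁻¹) i j = _
  rw [u_inv hVmem, hVM]
  simp only [Matrix.submatrix_apply, Matrix.reindex_apply]
  rw [hw i, hw j]
  rcases hsi : finSumFinEquiv.symm (Fin.cast hab.symm i) with i' | i' <;>
    rcases hsj : finSumFinEquiv.symm (Fin.cast hab.symm j) with j' | j' <;>
    simp only [Matrix.fromBlocks_apply₁₁, Matrix.fromBlocks_apply₁₂,
      Matrix.fromBlocks_apply₂₁, Matrix.fromBlocks_apply₂₂, Matrix.of_apply, Matrix.zero_apply]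
  · exact hz l _ _ (hu1 i') (hu2 j')
  · exact hz' l _ _ (hu2 i') (hu1 j')

private lemma comm_scalar {X : MatTup Λ} (hX : X.Irred) {H : Matrix (Fin X.deg) (Fin X.deg) ℂ}
    (hH : H.IsHermitian) (hc : ∀ l, H * X.mat l = X.mat l * H) :
    ∃ c : ℝ, H = (c : ℂ) • 1 := by
  classical
  obtain ⟨n, pn, f⟩ := X
  have hc' : ∀ l, H * f l = f l * H := hc
  obtain ⟨W, hWmem, d, hdiag⟩ : ∃ W ∈ Matrix.unitaryGroup (Fin n) ℂ, ∃ d : Fin n → ℝ,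
      Wᴴ * H * W = Matrix.diagonal (fun i => (d i : ℂ)) := by
    refine ⟨(hH.eigenvectorUnitary : Matrix (Fin n) (Fin n) ℂ), SetLike.coe_mem _,
      hH.eigenvalues, ?_⟩
    have h2 := hH.conjStarAlgAut_star_eigenvectorUnitary
    rw [Unitary.conjStarAlgAut_apply, Unitary.coe_star, star_star] at h2
    rw [Matrix.star_eq_conjTranspose] at h2
    rw [h2]
    rfl
  set D : Matrix (Fin n) (Fin n) ℂ := Matrix.diagonal (fun i => (d i : ℂ)) with hD_def
  have hspec : H = W * D * Wᴴ := by
    rw [← hdiag]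
    simp only [Matrix.mul_assoc]
    rw [cancel₂ hWmem, u_mul_star hWmem, Matrix.mul_one]
  set i0 : Fin n := ⟨0, pn⟩
  by_cases hconst : ∀ i, d i = d i0
  · refine ⟨d i0, ?_⟩
    have hDc : D = ((d i0 : ℂ)) • 1 := by
      rw [hD_def]
      ext i j
      rcases eq_or_ne i j with rfl | hij
      · simp [Matrix.diagonal_apply_eq, Matrix.one_apply_eq, hconst i]
      · simp [Matrix.diagonal_apply_ne _ hij, Matrix.one_apply_ne hij]
    rw [hspec, hDc, Matrix.mul_smul, Matrix.smul_mul, Matrix.mul_one, u_mul_star hWmem]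
  · push_neg at hconst
    obtain ⟨i1, hi1⟩ := hconst
    exfalso
    have hYirr : Irred (⟨n, pn, fun l => Wᴴ * f l * W⟩ : MatTup Λ) := by
      have h2 := irred_act (star_mem' hWmem) hX
      have h3 : (MatTup.mk n pn f).act Wᴴ = ⟨n, pn, fun l => Wᴴ * f l * W⟩ :=
        mk_eq fun l => by rw [u_inv (star_mem' hWmem), Matrix.conjTranspose_conjTranspose]
      rwa [h3] at h2
    have hcommD : ∀ l, D * (Wᴴ * f l * W) = (Wᴴ * f l * W) * D := by
      intro l
      rw [← hdiag]
      simp only [Matrix.mul_assoc]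
      rw [cancel₂ hWmem, cancel₂ hWmem]
      rw [← Matrix.mul_assoc H (f l) W, hc' l, Matrix.mul_assoc]
    have hzero : ∀ l i j, d i ≠ d j → (Wᴴ * f l * W) i j = 0 := by
      intro l i j hij
      have h2 := Matrix.ext_iff.mpr (hcommD l) i j
      rw [hD_def, Matrix.diagonal_mul, Matrix.mul_diagonal] at h2
      have h3 : ((d i : ℂ) - (d j : ℂ)) * (Wᴴ * f l * W) i j = 0 := by
        rw [sub_mul, h2, mul_comm]
        ring
      rcases mul_eq_zero.mp h3 with h4 | h4
      · exact absurd (by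
          have h5 := sub_eq_zero.mp h4
          exact_mod_cast h5) hij
      · exact h4
    refine hYirr (reducible_of_invariant (fun i => d i = d i0) ⟨i0, rfl⟩ ⟨i1, hi1⟩ ?_ ?_)
    · intro l i j hi hj
      exact hzero l i j (by rw [hi]; exact fun h => hj h.symm)
    · intro l i j hi hj
      exact hzero l i j (by rw [hj]; exact fun h => hi h)

private lemma end_scalar {X : MatTup Λ} (hX : X.Irred) {N : Matrix (Fin X.deg) (Fin X.deg) ℂ}
    (hN : N ∈ homS X X) : ∃ c : ℂ, N = c • 1 := by
  have hN' := homS_star hN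
  rw [mem_homS] at hN hN'
  have hH1 : (N + Nᴴ).IsHermitian := by
    show _ᴴ = _
    simp [Matrix.conjTranspose_add, add_comm]
  have hcomm1 : ∀ l, (N + Nᴴ) * X.mat l = X.mat l * (N + Nᴴ) := fun l => by
    rw [Matrix.add_mul, Matrix.mul_add, (hN l).1, (hN' l).1]
  obtain ⟨c1, hc1⟩ := comm_scalar hX hH1 hcomm1
  have hH2 : (Complex.I • (N - Nᴴ)).IsHermitian := by
    show _ᴴ = _
    rw [Matrix.conjTranspose_smul, Matrix.conjTranspose_sub,
      Matrix.conjTranspose_conjTranspose]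
    simp only [Complex.star_def, Complex.conj_I, neg_smul, smul_sub]
    abel
  have hcomm2 : ∀ l, (Complex.I • (N - Nᴴ)) * X.mat l = X.mat l * (Complex.I • (N - Nᴴ)) :=
    fun l => by
      rw [Matrix.smul_mul, Matrix.mul_smul, Matrix.sub_mul, Matrix.mul_sub,
        (hN l).1, (hN' l).1]
  obtain ⟨c2, hc2⟩ := comm_scalar hX hH2 hcomm2
  refine ⟨(((c1 : ℂ) - Complex.I * (c2 : ℂ)) / 2), ?_⟩
  have e2 : N - Nᴴ = (-(Complex.I * (c2 : ℂ))) • (1 : Matrix (Fin X.deg) (Fin X.deg) ℂ) := by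
    have h3 := congrArg (fun M => (-Complex.I) • M) hc2
    simp only [smul_smul, neg_mul, Complex.I_mul_I, neg_neg, one_smul] at h3
    exact h3
  have h2N : (2 : ℂ) • N = ((c1 : ℂ) + -(Complex.I * (c2 : ℂ))) •
      (1 : Matrix (Fin X.deg) (Fin X.deg) ℂ) := by
    have h3 : N + Nᴴ + (N - Nᴴ) = ((c1 : ℂ) + -(Complex.I * (c2 : ℂ))) •
        (1 : Matrix (Fin X.deg) (Fin X.deg) ℂ) := by
      rw [hc1, e2, add_smul]
    rw [← h3, two_smul]
    abel
  have h4 : N = (2 : ℂ)⁻¹ • ((2 : ℂ) • N) := by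
    rw [smul_smul]
    norm_num
  rw [h4, h2N, smul_smul]
  congr 1
  ring

/-! ### Dimensions of intertwiner spaces between irreducibles -/

open ComplexOrder in
private lemma uequiv_of_hom {X Y : MatTup Λ} (hX : X.Irred) (hY : Y.Irred)
    {M : Matrix (Fin Y.deg) (Fin X.deg) ℂ} (hM : M ∈ homS X Y) (hM0 : M ≠ 0) :
    X.UEquiv Y := by
  obtain ⟨c, hc⟩ := end_scalar hX (homS_mul (homS_star hM) hM)
  have hc0 : c ≠ 0 := by
    intro h
    rw [h, zero_smul] at hc
    exact hM0 (Matrix.conjTranspose_mul_self_eq_zero.mp hc)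
  obtain ⟨c', hc'⟩ := end_scalar hY (homS_mul hM (homS_star hM))
  have hc'0 : c' ≠ 0 := by
    intro h
    rw [h, zero_smul] at hc'
    exact hM0 (Matrix.self_mul_conjTranspose_eq_zero.mp hc')
  -- the two degrees agree
  obtain ⟨n, pn, f⟩ := X
  obtain ⟨m, pm, g⟩ := Y
  have hMi : Function.Injective M.mulVecLin := by
    intro x y hxy
    have h2 : ∀ z, Mᴴ *ᵥ (M *ᵥ z) = c • z := fun z => by
      rw [Matrix.mulVec_mulVec, hc, Matrix.smul_mulVec, Matrix.one_mulVec]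
    have h3 : M *ᵥ x = M *ᵥ y := hxy
    have h4 : c • x = c • y := by rw [← h2, ← h2, h3]
    exact smul_right_injective _ hc0 h4
  have hMi' : Function.Injective (Mᴴ).mulVecLin := by
    intro x y hxy
    have h2 : ∀ z, M *ᵥ (Mᴴ *ᵥ z) = c' • z := fun z => by
      rw [Matrix.mulVec_mulVec, hc', Matrix.smul_mulVec, Matrix.one_mulVec]
    have h3 : Mᴴ *ᵥ x = Mᴴ *ᵥ y := hxy
    have h4 : c' • x = c' • y := by rw [← h2, ← h2, h3]
    exact smul_right_injective _ hc'0 h4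
  have hle1 := LinearMap.finrank_le_finrank_of_injective hMi
  have hle2 := LinearMap.finrank_le_finrank_of_injective hMi'
  rw [Module.finrank_fin_fun, Module.finrank_fin_fun] at hle1 hle2
  have hd : n = m := le_antisymm hle1 hle2
  subst hd
  -- c is a positive real
  set i0 : Fin n := ⟨0, pn⟩
  have hcr : c = ((∑ k, Complex.normSq (M k i0) : ℝ) : ℂ) := by
    have h2 := Matrix.ext_iff.mpr hc i0 i0
    rw [Matrix.mul_apply, Matrix.smul_apply, Matrix.one_apply_eq, smul_eq_mul, mul_one] at h2
    rw [← h2]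
    push_cast
    refine Finset.sum_congr rfl fun k _ => ?_
    rw [Matrix.conjTranspose_apply, Complex.normSq_eq_conj_mul_self]
    rfl
  set r : ℝ := ∑ k, Complex.normSq (M k i0) with hr_def
  have hr0 : 0 ≤ r := Finset.sum_nonneg fun k _ => Complex.normSq_nonneg _
  have hrne : r ≠ 0 := by
    intro h
    exact hc0 (by rw [hcr, h, Complex.ofReal_zero])
  -- c' = c
  have hcc' : c' = c := by
    have t1 : (Mᴴ * M).trace = c * n := by
      rw [hc, Matrix.trace_smul, Matrix.trace_one, smul_eq_mul, Fintype.card_fin]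
    have t2 : (M * Mᴴ).trace = c' * n := by
      rw [hc', Matrix.trace_smul, Matrix.trace_one, smul_eq_mul, Fintype.card_fin]
    have t3 : c * n = c' * n := by rw [← t1, ← t2, Matrix.trace_mul_comm]
    have hn0 : (n : ℂ) ≠ 0 := Nat.cast_ne_zero.mpr pn.ne'
    exact (mul_right_cancel₀ hn0 t3).symm
  -- the unitary
  set s : ℝ := (Real.sqrt r)⁻¹ with hs_def
  have hss : (s : ℂ) * (s : ℂ) * c = 1 := by
    have h2 : s * s * r = 1 := by
      rw [hs_def, ← mul_inv, Real.mul_self_sqrt hr0]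
      exact inv_mul_cancel₀ hrne
    rw [hcr, ← Complex.ofReal_mul, ← Complex.ofReal_mul, h2, Complex.ofReal_one]
  set U : Matrix (Fin n) (Fin n) ℂ := (s : ℂ) • M with hU_def
  have hUs : Uᴴ = (s : ℂ) • Mᴴ := by
    rw [hU_def, Matrix.conjTranspose_smul, Complex.star_def, Complex.conj_ofReal]
  have hUmem : U ∈ Matrix.unitaryGroup (Fin n) ℂ := by
    rw [Matrix.mem_unitaryGroup_iff', Matrix.star_eq_conjTranspose, hUs, hU_def,
      Matrix.smul_mul, Matrix.mul_smul, hc, smul_smul, smul_smul, hss, one_smul]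
  refine uequiv_intro U hUmem fun l => ?_
  rw [mem_homS] at hM
  have h5 : M * f l = g l * M := (hM l).1
  rw [u_inv hUmem, hUs, hU_def]
  simp only [Matrix.smul_mul, Matrix.mul_smul, smul_smul]
  rw [h5, Matrix.mul_assoc, hc', hcc', Matrix.mul_smul, Matrix.mul_one, smul_smul, hss,
    one_smul]

private lemma hdim_eq_one {X Y : MatTup Λ} (hX : X.Irred) (h : X.UEquiv Y) : hdim X Y = 1 := by
  obtain ⟨n, pn, f⟩ := X
  obtain ⟨m, pm, g⟩ := Y
  have hd : n = m := uequiv_deg h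
  subst hd
  obtain ⟨U, hU, hUf⟩ := uequiv_elim h
  have hUhom : U ∈ homS (⟨n, pn, f⟩ : MatTup Λ) ⟨n, pm, g⟩ := hom_of_conj hU hUf
  have hU0 : U ≠ 0 := by
    intro h0
    have h2 := u_star_mul hU
    rw [h0, Matrix.mul_zero] at h2
    have h3 := Matrix.ext_iff.mpr h2 ⟨0, pn⟩ ⟨0, pn⟩
    rw [Matrix.zero_apply, Matrix.one_apply_eq] at h3
    exact zero_ne_one h3
  have hspan : homS (⟨n, pn, f⟩ : MatTup Λ) ⟨n, pm, g⟩ = Submodule.span ℂ {U} := by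
    apply le_antisymm
    · intro M hM
      obtain ⟨c, hc⟩ := end_scalar hX (homS_mul (homS_star hUhom) hM)
      have h2 : M = c • U := by
        calc M = U * (Uᴴ * M) := (cancel₂ hU M).symm
        _ = U * (c • (1 : Matrix (Fin n) (Fin n) ℂ)) := by rw [hc]
        _ = c • U := by rw [Matrix.mul_smul, Matrix.mul_one]
      rw [h2]
      exact Submodule.smul_mem _ _ (Submodule.mem_span_singleton_self U)
    · rw [Submodule.span_le, Set.singleton_subset_iff]
      exact hUhom
  rw [hdim, hspan]
  exact finrank_span_singleton hU0

private lemma hdim_eq_zero {X Y : MatTup Λ} (hX : X.Irred) (hY : Y.Irred)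
    (h : ¬ X.UEquiv Y) : hdim X Y = 0 := by
  have hbot : homS X Y = ⊥ := by
    rw [eq_bot_iff]
    intro M hM
    rw [Submodule.mem_bot]
    by_contra hM0
    exact h (uequiv_of_hom hX hY hM hM0)
  rw [hdim, hbot]
  exact finrank_bot ℂ _

private lemma hdim_bigDsum (A : MatTup Λ) : ∀ {k : ℕ} (T : Fin k → MatTup Λ) (h : 0 < k),
    hdim A (bigDsum T h) = ∑ i, hdim A (T i) := by
  intro k
  induction k with
  | zero => exact fun T h => absurd h (lt_irrefl 0)
  | succ k ih =>
    intro T h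
    cases k with
    | zero => simp [bigDsum]
    | succ k' =>
      rw [show bigDsum T h = (bigDsum (fun j : Fin (k' + 1) => T j.castSucc)
          k'.succ_pos).dsum (T (Fin.last (k' + 1))) from rfl]
      rw [hdim_dsum, ih]
      conv_rhs => rw [Fin.sum_univ_castSucc]

end MatTup

/-- uniqueness of decomposition into irreducibles. If
`T 0 ⊕ ⋯ ⊕ T (n-1) ≡ S 0 ⊕ ⋯ ⊕ S (k-1)` with all `T j`, `S j` irreducible, then `k = n`
and there is a permutation `τ` with `S j ≡ T (τ j)` for all `j`. -/
theorem stmt_6 {Λ : Type*} [Nonempty Λ] {n k : ℕ} (hn : 0 < n) (hk : 0 < k)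
    (T : Fin n → MatTup Λ) (S : Fin k → MatTup Λ)
    (hT : ∀ j, (T j).Irred) (hS : ∀ j, (S j).Irred)
    (h : (MatTup.bigDsum T hn).UEquiv (MatTup.bigDsum S hk)) :
    ∃ (hkn : k = n) (τ : Equiv.Perm (Fin n)),
      ∀ j : Fin k, (S j).UEquiv (T (τ (Fin.cast hkn j))) := by
  classical
  letI st : Setoid (MatTup Λ) := MatTup.ueSetoid
  have key : ∀ (A : MatTup Λ), A.Irred →
      Fintype.card {j : Fin k // Quotient.mk st (S j) = Quotient.mk st A}
        = Fintype.card {i : Fin n // Quotient.mk st (T i) = Quotient.mk st A} := by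
    intro A hA
    have e1 : ∀ (m : ℕ) (R : Fin m → MatTup Λ), (∀ j, (R j).Irred) →
        (∑ j, A.hdim (R j))
          = Fintype.card {j : Fin m // Quotient.mk st (R j) = Quotient.mk st A} := by
      intro m R hR
      rw [Fintype.card_subtype, Finset.card_filter]
      refine Finset.sum_congr rfl fun j _ => ?_
      by_cases hj : A.UEquiv (R j)
      · rw [MatTup.hdim_eq_one hA hj, if_pos (Quotient.sound (MatTup.uequiv_symm hj))]
      · rw [MatTup.hdim_eq_zero hA (hR j) hj, if_neg ?_]
        intro hq
        exact hj (MatTup.uequiv_symm (Quotient.exact hq))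
    have e2 := e1 n T hT
    have e3 := e1 k S hS
    rw [← MatTup.hdim_bigDsum A T hn, MatTup.hdim_congr_right A h,
      MatTup.hdim_bigDsum A S hk] at e2
    exact e3.symm.trans e2
  have key' : ∀ q : Quotient st,
      Fintype.card {j : Fin k // Quotient.mk st (S j) = q}
        = Fintype.card {i : Fin n // Quotient.mk st (T i) = q} := by
    intro q
    by_cases h1 : ∃ i : Fin n, Quotient.mk st (T i) = q
    · obtain ⟨i, hi⟩ := h1
      rw [← hi]
      exact key (T i) (hT i)
    · by_cases h2 : ∃ j : Fin k, Quotient.mk st (S j) = q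
      · obtain ⟨j, hj⟩ := h2
        rw [← hj]
        exact key (S j) (hS j)
      · rw [Fintype.card_eq_zero_iff.mpr ⟨fun x => h2 ⟨x.1, x.2⟩⟩,
            Fintype.card_eq_zero_iff.mpr ⟨fun x => h1 ⟨x.1, x.2⟩⟩]
  let F : ∀ q : Quotient st, {j : Fin k // Quotient.mk st (S j) = q}
      ≃ {i : Fin n // Quotient.mk st (T i) = q} := fun q => Fintype.equivOfCardEq (key' q)
  let e : Fin k ≃ Fin n :=
    ((Equiv.sigmaFiberEquiv (fun j : Fin k => Quotient.mk st (S j))).symm.trans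
      (Equiv.sigmaCongrRight F)).trans
      (Equiv.sigmaFiberEquiv (fun i : Fin n => Quotient.mk st (T i)))
  have he : ∀ j : Fin k, Quotient.mk st (T (e j)) = Quotient.mk st (S j) := by
    intro j
    have h2 : e j = (F (Quotient.mk st (S j)) ⟨j, rfl⟩).1 := rfl
    rw [h2]
    exact (F (Quotient.mk st (S j)) ⟨j, rfl⟩).2
  have hkn : k = n := by
    have h2 := Fintype.card_congr e
    simpa using h2
  refine ⟨hkn, (finCongr hkn.symm).trans e, fun j => ?_⟩
  have h3 : (finCongr hkn.symm) (Fin.cast hkn j) = j := by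
    ext
    simp
  rw [Equiv.trans_apply, h3]
  exact MatTup.uequiv_symm (Quotient.exact (he j))
end
end

section
/- A tuple X of complex matrices over an index set Λ is irreducible if and only if every unitary U ∈ stab(X) is a scalar multiple of the identity matrix. -/
noncomputable section

/- helper lemmas -/
open Matrix
namespace MatTup
variable {Λ : Type*}

lemma ext' {P Q : MatTup Λ} (h : P.deg = Q.deg)
    (hm : ∀ l i j, P.mat l i j = Q.mat l (finCongr h i) (finCongr h j)) : P = Q := by
  obtain ⟨n, hn, f⟩ := P
  obtain ⟨n', hn', g⟩ := Q
  dsimp at h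
  subst h
  simp only [finCongr_refl, Equiv.refl_apply] at hm
  congr 1
  funext l
  exact Matrix.ext (hm l)

lemma mat_eq_of_eq {P Q : MatTup Λ} (e : P = Q) (h : P.deg = Q.deg) :
    ∀ l i j, P.mat l i j = Q.mat l (finCongr h i) (finCongr h j) := by
  subst e; simp

lemma perm_unitary {n : ℕ} (σ : Equiv.Perm (Fin n)) :
    (σ.toPEquiv.toMatrix : Matrix (Fin n) (Fin n) ℂ) ∈ Matrix.unitaryGroup (Fin n) ℂ := by
  rw [Matrix.mem_unitaryGroup_iff]
  have hstar : star (σ.toPEquiv.toMatrix : Matrix (Fin n) (Fin n) ℂ)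
      = (σ.symm).toPEquiv.toMatrix := by
    rw [Equiv.toPEquiv_symm, PEquiv.toMatrix_symm]
    ext i j
    simp only [Matrix.star_apply, Matrix.transpose_apply, PEquiv.toMatrix_apply,
      Equiv.toPEquiv_apply, Option.mem_def, Option.some.injEq]
    split <;> simp
  rw [hstar, ← PEquiv.toMatrix_trans, ← Equiv.toPEquiv_trans]
  simp

end MatTup

namespace MatTup
variable {Λ : Type*}

lemma conj_perm {n : ℕ} (σ : Equiv.Perm (Fin n)) (M : Matrix (Fin n) (Fin n) ℂ) :
    σ.toPEquiv.toMatrix * M * (σ.toPEquiv.toMatrix : Matrix (Fin n) (Fin n) ℂ)⁻¹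
      = M.submatrix σ σ := by
  have hinv : (σ.toPEquiv.toMatrix : Matrix (Fin n) (Fin n) ℂ)⁻¹
      = (σ.symm).toPEquiv.toMatrix := by
    apply Matrix.inv_eq_right_inv
    rw [← PEquiv.toMatrix_trans, ← Equiv.toPEquiv_trans]
    simp
  rw [hinv, PEquiv.toMatrix_toPEquiv_mul, PEquiv.mul_toMatrix_toPEquiv]
  ext i j
  simp

lemma not_irred_of_split (X : MatTup Λ) (V : Matrix (Fin X.deg) (Fin X.deg) ℂ)
    (hV : V ∈ Matrix.unitaryGroup (Fin X.deg) ℂ) (p : Fin X.deg → Prop) [DecidablePred p]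
    (i₀ j₀ : Fin X.deg) (hi : p i₀) (hj : ¬ p j₀)
    (hvan : ∀ l i j, ¬ (p i ↔ p j) → (V * X.mat l * V⁻¹) i j = 0) : ¬ X.Irred := by
  intro hIr
  apply hIr
  have hk : 0 < Fintype.card {i // p i} := Fintype.card_pos_iff.mpr ⟨⟨i₀, hi⟩⟩
  have hm : 0 < Fintype.card {i // ¬ p i} := Fintype.card_pos_iff.mpr ⟨⟨j₀, hj⟩⟩
  set k := Fintype.card {i // p i}
  set m := Fintype.card {i // ¬ p i}
  set M : Λ → Matrix (Fin X.deg) (Fin X.deg) ℂ := fun l => V * X.mat l * V⁻¹ with hM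
  let g : Fin k ⊕ Fin m ≃ Fin X.deg :=
    (Equiv.sumCongr (Fintype.equivFin {i // p i}).symm
      (Fintype.equivFin {i // ¬ p i}).symm).trans (Equiv.sumCompl p)
  have hpl : ∀ a, p (g (Sum.inl a)) := by
    intro a
    simp only [g, Equiv.trans_apply, Equiv.sumCongr_apply, Sum.map_inl,
      Equiv.sumCompl_apply_inl]
    exact Subtype.prop _
  have hpr : ∀ a, ¬ p (g (Sum.inr a)) := by
    intro a
    simp only [g, Equiv.trans_apply, Equiv.sumCongr_apply, Sum.map_inr,
      Equiv.sumCompl_apply_inr]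
    exact ((Fintype.equivFin {i // ¬ p i}).symm a).2
  have hkm : k + m = X.deg := by
    have := Fintype.card_congr g
    simpa using this
  let σ : Equiv.Perm (Fin X.deg) :=
    ((finCongr hkm.symm).trans finSumFinEquiv.symm).trans g
  refine ⟨⟨k, hk, fun l => Matrix.of fun a b => M l (g (Sum.inl a)) (g (Sum.inl b))⟩,
          ⟨m, hm, fun l => Matrix.of fun a b => M l (g (Sum.inr a)) (g (Sum.inr b))⟩,
          σ.toPEquiv.toMatrix * V, mul_mem (perm_unitary σ) hV, ?_⟩
  refine ext' hkm.symm ?_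
  intro l i j
  have hVinv : (σ.toPEquiv.toMatrix * V)⁻¹ = V⁻¹ * (σ.toPEquiv.toMatrix : Matrix (Fin X.deg) (Fin X.deg) ℂ)⁻¹ :=
    Matrix.mul_inv_rev _ _
  have lhs : (X.act (σ.toPEquiv.toMatrix * V)).mat l i j = M l (σ i) (σ j) := by
    show ((σ.toPEquiv.toMatrix * V * X.mat l * (σ.toPEquiv.toMatrix * V)⁻¹ :
      Matrix (Fin X.deg) (Fin X.deg) ℂ)) i j = _
    rw [hVinv]
    have : σ.toPEquiv.toMatrix * V * X.mat l * (V⁻¹ * (σ.toPEquiv.toMatrix : Matrix (Fin X.deg) (Fin X.deg) ℂ)⁻¹)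
        = σ.toPEquiv.toMatrix * M l * (σ.toPEquiv.toMatrix : Matrix (Fin X.deg) (Fin X.deg) ℂ)⁻¹ := by
      simp only [hM, Matrix.mul_assoc]
    rw [this, conj_perm]
    rfl
  rw [lhs]
  show M l (σ i) (σ j) =
    (Matrix.reindex finSumFinEquiv finSumFinEquiv
      (Matrix.fromBlocks _ 0 0 _)) (finCongr hkm.symm i) (finCongr hkm.symm j)
  rw [Matrix.reindex_apply, Matrix.submatrix_apply]
  have hσ : ∀ x : Fin X.deg, σ x = g (finSumFinEquiv.symm (finCongr hkm.symm x)) := fun x => rfl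
  rw [hσ i, hσ j]
  rcases finSumFinEquiv.symm (finCongr hkm.symm i) with a | a <;>
    rcases finSumFinEquiv.symm (finCongr hkm.symm j) with b | b
  · rfl
  · exact hvan l _ _ (by simp [hpl a, hpr b])
  · exact hvan l _ _ (by simp [hpr a, hpl b])
  · rfl

end MatTup

namespace MatTup
variable {Λ : Type*}

lemma entry_zero_of_comm_diag {n : ℕ} {M : Matrix (Fin n) (Fin n) ℂ} {d : Fin n → ℂ}
    (h : M * Matrix.diagonal d = Matrix.diagonal d * M) {i j : Fin n} (hd : d i ≠ d j) :
    M i j = 0 := by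
  have h2 : (M * Matrix.diagonal d) i j = (Matrix.diagonal d * M) i j := by rw [h]
  rw [Matrix.mul_diagonal, Matrix.diagonal_mul] at h2
  have h3 : M i j * (d j - d i) = 0 := by linear_combination h2
  rcases mul_eq_zero.mp h3 with h4 | h4
  · exact h4
  · exact absurd (sub_eq_zero.mp h4).symm hd

lemma scalar_of_hermitian_commute (X : MatTup Λ) (hIr : X.Irred)
    {H : Matrix (Fin X.deg) (Fin X.deg) ℂ} (hH : H.IsHermitian)
    (hc : ∀ l, H * X.mat l = X.mat l * H) : ∃ c : ℂ, H = c • 1 := by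
  set W : Matrix (Fin X.deg) (Fin X.deg) ℂ := (hH.eigenvectorUnitary : Matrix (Fin X.deg) (Fin X.deg) ℂ) with hW
  have hWmem : W ∈ Matrix.unitaryGroup (Fin X.deg) ℂ := hH.eigenvectorUnitary.2
  have h1 : W * star W = 1 := Matrix.mem_unitaryGroup_iff.mp hWmem
  have h2 : star W * W = 1 := Matrix.mem_unitaryGroup_iff'.mp hWmem
  have hdiag : star W * H * W = Matrix.diagonal (RCLike.ofReal ∘ hH.eigenvalues) :=
    by rw [← hH.conjStarAlgAut_star_eigenvectorUnitary, Unitary.conjStarAlgAut_star_apply]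
  by_cases hconst : ∀ i, hH.eigenvalues i = hH.eigenvalues ⟨0, X.deg_pos⟩
  · refine ⟨(hH.eigenvalues ⟨0, X.deg_pos⟩ : ℂ), ?_⟩
    have hD : Matrix.diagonal (RCLike.ofReal ∘ hH.eigenvalues)
        = (hH.eigenvalues ⟨0, X.deg_pos⟩ : ℂ) • (1 : Matrix (Fin X.deg) (Fin X.deg) ℂ) := by
      ext i j
      rcases eq_or_ne i j with rfl | hij
      · simp [hconst i]
      · simp [Matrix.diagonal_apply_ne _ hij, Matrix.one_apply_ne hij]
    have := hH.spectral_theorem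
    rw [hD] at this
    refine this.trans ?_
    show W * ((hH.eigenvalues ⟨0, X.deg_pos⟩ : ℂ) • 1) * star W = _
    rw [Matrix.mul_smul, Matrix.smul_mul, mul_one, h1]
  · push_neg at hconst
    obtain ⟨j₀, hne⟩ := hconst
    exfalso
    have hsWmem : star W ∈ Matrix.unitaryGroup (Fin X.deg) ℂ := by
      rw [Matrix.mem_unitaryGroup_iff, star_star, h2]
    have hsWinv : (star W : Matrix (Fin X.deg) (Fin X.deg) ℂ)⁻¹ = W :=
      Matrix.inv_eq_right_inv h2
    refine not_irred_of_split X (star W) hsWmem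
      (fun i => hH.eigenvalues i = hH.eigenvalues ⟨0, X.deg_pos⟩) ⟨0, X.deg_pos⟩ j₀
      rfl hne ?_ hIr
    intro l i j hij
    rw [hsWinv]
    set M : Matrix (Fin X.deg) (Fin X.deg) ℂ := star W * X.mat l * W with hMdef
    have hcancel1 : ∀ Z : Matrix (Fin X.deg) (Fin X.deg) ℂ, W * (star W * Z) = Z := by
      intro Z; rw [← Matrix.mul_assoc, h1, Matrix.one_mul]
    have hcomm : M * Matrix.diagonal (RCLike.ofReal ∘ hH.eigenvalues)
        = Matrix.diagonal (RCLike.ofReal ∘ hH.eigenvalues) * M := by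
      rw [← hdiag, hMdef]
      simp only [Matrix.mul_assoc, hcancel1]
      congr 1
      rw [← Matrix.mul_assoc, ← hc l, Matrix.mul_assoc]
    refine entry_zero_of_comm_diag hcomm ?_
    simp only [Function.comp_apply, ne_eq]
    intro hcontr
    have hev : hH.eigenvalues i = hH.eigenvalues j := by
      exact_mod_cast hcontr
    rcases Decidable.em (hH.eigenvalues i = hH.eigenvalues ⟨0, X.deg_pos⟩) with hp | hp
    · exact hij ⟨fun _ => hev.symm.trans hp, fun _ => hp⟩
    · exact hij ⟨fun h' => absurd h' hp, fun h' => absurd (hev.trans h') hp⟩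

end MatTup


/-- A tuple `X` is irreducible iff every unitary in `stab(X)` is a
scalar multiple of the identity matrix. -/
theorem stmt_9 {Λ : Type*} [Nonempty Λ] (X : MatTup Λ) :
    X.Irred ↔ ∀ U ∈ X.stab, ∃ c : ℂ, U = c • (1 : Matrix (Fin X.deg) (Fin X.deg) ℂ) := by
  constructor
  · intro hIr U hU
    obtain ⟨hUmem, hact⟩ := hU
    have h1 : U * star U = 1 := Matrix.mem_unitaryGroup_iff.mp hUmem
    have h2 : star U * U = 1 := Matrix.mem_unitaryGroup_iff'.mp hUmem
    have hUinv : U⁻¹ = star U := Matrix.inv_eq_right_inv h1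
    have hmat : ∀ l, U * X.mat l * star U = X.mat l := by
      intro l
      ext i j
      have h' := MatTup.mat_eq_of_eq hact rfl l i j
      rw [← hUinv]
      exact h'
    have hcommU : ∀ l, U * X.mat l = X.mat l * U := by
      intro l
      have h' := congrArg (· * U) (hmat l)
      simpa only [Matrix.mul_assoc, h2, Matrix.mul_one] using h'
    have cancel1 : ∀ Z : Matrix (Fin X.deg) (Fin X.deg) ℂ, U * (star U * Z) = Z := by
      intro Z; rw [← Matrix.mul_assoc, h1, Matrix.one_mul]
    have cancel2 : ∀ Z : Matrix (Fin X.deg) (Fin X.deg) ℂ, star U * (U * Z) = Z := by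
      intro Z; rw [← Matrix.mul_assoc, h2, Matrix.one_mul]
    have hcommsU : ∀ l, star U * X.mat l = X.mat l * star U := by
      intro l
      have h' := congrArg (fun Z => star U * Z * star U) (hcommU l)
      simpa only [Matrix.mul_assoc, cancel1, cancel2, h1, h2, Matrix.mul_one] using h'.symm
    have hH1 : (U + star U).IsHermitian := by
      show star (U + star U) = U + star U
      rw [star_add, star_star, add_comm]
    have hH2 : (Complex.I • (U - star U)).IsHermitian := by
      show star (Complex.I • (U - star U)) = Complex.I • (U - star U)
      rw [star_smul, star_sub, star_star]
      simp only [Complex.star_def, Complex.conj_I, neg_smul, smul_sub, neg_sub]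
      abel
    have hc1 : ∀ l, (U + star U) * X.mat l = X.mat l * (U + star U) := by
      intro l
      rw [Matrix.add_mul, Matrix.mul_add, hcommU l, hcommsU l]
    have hc2 : ∀ l, (Complex.I • (U - star U)) * X.mat l
        = X.mat l * (Complex.I • (U - star U)) := by
      intro l
      rw [Matrix.smul_mul, Matrix.mul_smul, Matrix.sub_mul, Matrix.mul_sub, hcommU l, hcommsU l]
    obtain ⟨a, ha⟩ := MatTup.scalar_of_hermitian_commute X hIr hH1 hc1
    obtain ⟨b, hb⟩ := MatTup.scalar_of_hermitian_commute X hIr hH2 hc2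
    have hsub : U - star U = (-Complex.I * b) • (1 : Matrix (Fin X.deg) (Fin X.deg) ℂ) := by
      have h' := congrArg (fun Z => (-Complex.I) • Z) hb
      simp only [smul_smul] at h'
      have hii : -Complex.I * Complex.I = 1 := by
        rw [neg_mul, Complex.I_mul_I, neg_neg]
      rw [hii, one_smul] at h'
      exact h'
    have h2U : (2:ℂ) • U = (a + -Complex.I * b) • (1 : Matrix (Fin X.deg) (Fin X.deg) ℂ) := by
      have hUU : U + U = (U + star U) + (U - star U) := by abel
      rw [two_smul, hUU, ha, hsub, add_smul]
    refine ⟨(a + -Complex.I * b) / 2, ?_⟩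
    have h3 := congrArg (fun Z => ((2:ℂ)⁻¹) • Z) h2U
    simp only [smul_smul] at h3
    norm_num at h3
    rw [h3]
    congr 1
    ring
  · intro hs
    rintro ⟨A, B, V, hV, hact⟩
    have h : X.deg = A.deg + B.deg := congrArg MatTup.deg hact
    have hV1 : V * star V = 1 := Matrix.mem_unitaryGroup_iff.mp hV
    have hV2 : star V * V = 1 := Matrix.mem_unitaryGroup_iff'.mp hV
    have hVinv : V⁻¹ = star V := Matrix.inv_eq_right_inv hV1
    have cV1 : ∀ Z : Matrix (Fin X.deg) (Fin X.deg) ℂ, V * (star V * Z) = Z := by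
      intro Z; rw [← Matrix.mul_assoc, hV1, Matrix.one_mul]
    have cV2 : ∀ Z : Matrix (Fin X.deg) (Fin X.deg) ℂ, star V * (V * Z) = Z := by
      intro Z; rw [← Matrix.mul_assoc, hV2, Matrix.one_mul]
    have hmatV := MatTup.mat_eq_of_eq hact h
    set d : Fin X.deg → ℂ := fun i =>
      if (finSumFinEquiv.symm (finCongr h i)).isLeft then 1 else -1 with hd
    set D : Matrix (Fin X.deg) (Fin X.deg) ℂ := Matrix.diagonal d with hDdef
    have hdpm : ∀ i, d i = 1 ∨ d i = -1 := by
      intro i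
      rw [hd]
      by_cases hcase : (finSumFinEquiv.symm (finCongr h i)).isLeft = true
      · left; exact if_pos hcase
      · right; exact if_neg hcase
    have hdstar : ∀ i, d i * star (d i) = 1 := by
      intro i
      rcases hdpm i with h' | h' <;> rw [h'] <;> simp
    have hDmem : D ∈ Matrix.unitaryGroup (Fin X.deg) ℂ := by
      rw [Matrix.mem_unitaryGroup_iff, hDdef, Matrix.star_eq_conjTranspose,
        Matrix.diagonal_conjTranspose, Matrix.diagonal_mul_diagonal, ← Matrix.diagonal_one]
      ext i j
      rcases eq_or_ne i j with rfl | hij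
      · rw [Matrix.diagonal_apply_eq, Matrix.diagonal_apply_eq]
        exact hdstar i
      · rw [Matrix.diagonal_apply_ne _ hij, Matrix.diagonal_apply_ne _ hij]
    have hD1 : D * star D = 1 := Matrix.mem_unitaryGroup_iff.mp hDmem
    set M : Λ → Matrix (Fin X.deg) (Fin X.deg) ℂ := fun l => V * X.mat l * star V with hM
    have hcommD : ∀ l, D * M l = M l * D := by
      intro l
      ext i j
      rw [hDdef, Matrix.diagonal_mul, Matrix.mul_diagonal]
      rcases Decidable.em ((finSumFinEquiv.symm (finCongr h i)).isLeft
          = (finSumFinEquiv.symm (finCongr h j)).isLeft) with hsame | hdiff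
      · have hdd : d i = d j := by simp only [hd, hsame]
        rw [hdd, mul_comm]
      · have hz : M l i j = 0 := by
          have h' := hmatV l i j
          rw [← hVinv] at hM
          have : M l i j = (X.act V).mat l i j := by rw [hM]; rfl
          rw [this, h']
          show (Matrix.reindex finSumFinEquiv finSumFinEquiv
            (Matrix.fromBlocks (A.mat l) 0 0 (B.mat l))) _ _ = 0
          show (Matrix.fromBlocks (A.mat l) 0 0 (B.mat l)) (finSumFinEquiv.symm (finCongr h i))
            (finSumFinEquiv.symm (finCongr h j)) = 0
          rcases hx : finSumFinEquiv.symm (finCongr h i) with a | a <;>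
            rcases hy : finSumFinEquiv.symm (finCongr h j) with b | b
          · rw [hx, hy] at hdiff; simp at hdiff
          · simp [Matrix.fromBlocks_apply₁₂]
          · simp [Matrix.fromBlocks_apply₂₁]
          · rw [hx, hy] at hdiff; simp at hdiff
        rw [hz, mul_zero, zero_mul]
    set U : Matrix (Fin X.deg) (Fin X.deg) ℂ := star V * D * V with hUdef
    have hsVmem : star V ∈ Matrix.unitaryGroup (Fin X.deg) ℂ := by
      rw [Matrix.mem_unitaryGroup_iff, star_star, hV2]
    have hUmem : U ∈ Matrix.unitaryGroup (Fin X.deg) ℂ :=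
      mul_mem (mul_mem hsVmem hDmem) hV
    have hU1 : U * star U = 1 := Matrix.mem_unitaryGroup_iff.mp hUmem
    have hUinv : U⁻¹ = star U := Matrix.inv_eq_right_inv hU1
    have hA1 : ∀ l, V * X.mat l = M l * V := by
      intro l
      rw [hM]
      simp only [Matrix.mul_assoc, hV2, Matrix.mul_one]
    have hA2 : ∀ l, star V * M l = X.mat l * star V := by
      intro l
      rw [hM, ← Matrix.mul_assoc, ← Matrix.mul_assoc, hV2, Matrix.one_mul]
    have hcomm : ∀ l, U * X.mat l = X.mat l * U := by
      intro l
      calc star V * D * V * X.mat l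
          = star V * D * (V * X.mat l) := by rw [Matrix.mul_assoc]
        _ = star V * D * (M l * V) := by rw [hA1]
        _ = star V * (D * M l) * V := by simp only [Matrix.mul_assoc]
        _ = star V * (M l * D) * V := by rw [hcommD l]
        _ = (star V * M l) * (D * V) := by simp only [Matrix.mul_assoc]
        _ = (X.mat l * star V) * (D * V) := by rw [hA2]
        _ = X.mat l * (star V * D * V) := by simp only [Matrix.mul_assoc]
    have hconj : ∀ l, U * X.mat l * U⁻¹ = X.mat l := by
      intro l
      rw [hUinv, hcomm l, Matrix.mul_assoc, hU1, Matrix.mul_one]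
    have hUact : X.act U = X := by
      refine MatTup.ext' rfl ?_
      intro l i j
      show (U * X.mat l * U⁻¹) i j = X.mat l i j
      rw [hconj l]
    obtain ⟨c, hc⟩ := hs U ⟨hUmem, hUact⟩
    have hDc : D = c • (1 : Matrix (Fin X.deg) (Fin X.deg) ℂ) := by
      calc D = V * (star V * D * V) * star V := by
            simp only [Matrix.mul_assoc, cV1, hV1, Matrix.mul_one]
        _ = V * (c • 1) * star V := by rw [← hUdef, hc]
        _ = c • (1 : Matrix (Fin X.deg) (Fin X.deg) ℂ) := by
            rw [Matrix.mul_smul, Matrix.smul_mul, Matrix.mul_one, hV1]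
    have hcL : (1 : ℂ) = c := by
      set iL : Fin X.deg := (finCongr h).symm (finSumFinEquiv (Sum.inl ⟨0, A.deg_pos⟩)) with hiL
      have e1 := Matrix.ext_iff.mpr hDc iL iL
      rw [hDdef] at e1
      simp only [Matrix.diagonal_apply_eq, Matrix.smul_apply, Matrix.one_apply_eq,
        smul_eq_mul, mul_one] at e1
      have hd1 : d iL = 1 := by
        rw [hd]
        simp only [hiL, Equiv.apply_symm_apply, Equiv.symm_apply_apply, Sum.isLeft_inl,
          if_true]
      exact hd1.symm.trans e1
    have hcR : (-1 : ℂ) = c := by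
      set iR : Fin X.deg := (finCongr h).symm (finSumFinEquiv (Sum.inr ⟨0, B.deg_pos⟩)) with hiR
      have e1 := Matrix.ext_iff.mpr hDc iR iR
      rw [hDdef] at e1
      simp only [Matrix.diagonal_apply_eq, Matrix.smul_apply, Matrix.one_apply_eq,
        smul_eq_mul, mul_one] at e1
      have hd1 : d iR = -1 := by
        rw [hd]
        simp only [hiR, Equiv.apply_symm_apply, Equiv.symm_apply_apply, Sum.isLeft_inr]
        simp
      exact hd1.symm.trans e1
    rw [← hcR] at hcL
    norm_num at hcL
end
end

section
/- Every topological space X having property (σ) (with respect to some sequence (K_n)) is a paracompact Hausdorff space. -/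
open Set Topology

section Aux
variable {X : Type*} [TopologicalSpace X]

/-- In a normal space, disjoint closed sets can be separated by open sets with
disjoint closures. -/
lemma sep_closure_aux [NormalSpace X] {s t : Set X} (hs : IsClosed s) (ht : IsClosed t)
    (hd : Disjoint s t) :
    ∃ U V : Set X, IsOpen U ∧ IsOpen V ∧ s ⊆ U ∧ t ⊆ V ∧
      Disjoint (closure U) (closure V) := by
  obtain ⟨U, hUo, hsU, hUc⟩ :=
    normal_exists_closure_subset hs ht.isOpen_compl (Set.disjoint_left.1 hd)
  obtain ⟨V, hVo, htV, hVc⟩ :=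
    normal_exists_closure_subset ht isClosed_closure.isOpen_compl
      (fun x hx hx' => hUc hx' hx)
  exact ⟨U, V, hUo, hVo, hsU, htV,
    Set.disjoint_of_subset_right hVc disjoint_compl_right⟩

/-- Michael's lemma: a regular Lindelöf space is paracompact. -/
lemma paracompact_of_regular_lindelof [RegularSpace X] [LindelofSpace X] :
    ParacompactSpace X := by
  constructor
  intro α s ho hu
  rcases isEmpty_or_nonempty X with hX | hX
  · exact ⟨α, s, ho, hu, fun x => (IsEmpty.false x).elim, fun a => ⟨a, subset_rfl⟩⟩
  have hmem : ∀ x : X, ∃ a, x ∈ s a := fun x => by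
    have := hu ▸ Set.mem_univ x; exact Set.mem_iUnion.1 this
  choose a ha using hmem
  have hnb : ∀ x : X, ∃ t ∈ 𝓝 x, IsClosed t ∧ t ⊆ s (a x) := fun x =>
    exists_mem_nhds_isClosed_subset ((ho (a x)).mem_nhds (ha x))
  choose t htmem htcl htsub using hnb
  set V : X → Set X := fun x => interior (t x) with hV
  have hVx : ∀ x, x ∈ V x := fun x => mem_interior_iff_mem_nhds.2 (htmem x)
  have hVcl : ∀ x, closure (V x) ⊆ s (a x) := fun x =>
    ((closure_mono interior_subset).trans (htcl x).closure_subset).trans (htsub x)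
  obtain ⟨r, hrc, hrcov⟩ := isLindelof_univ.elim_countable_subcover V
    (fun x => isOpen_interior) (fun y _ => Set.mem_iUnion.2 ⟨y, hVx y⟩)
  have hrne : r.Nonempty := by
    obtain ⟨y⟩ := hX
    obtain ⟨x, hx, -⟩ := Set.mem_iUnion₂.1 (hrcov (Set.mem_univ y))
    exact ⟨x, hx⟩
  obtain ⟨f, hf⟩ := hrc.exists_eq_range hrne
  classical
  set W : ℕ → Set X := fun n =>
    s (a (f n)) \ ⋃ i ∈ Finset.range n, closure (V (f i)) with hW
  have hWo : ∀ n, IsOpen (W n) :=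
    fun n => (ho _).sdiff (isClosed_biUnion_finset fun i _ => isClosed_closure)
  -- every point belongs to closure (V (f n)) for some n
  have hcov' : ∀ y : X, ∃ n, y ∈ closure (V (f n)) := by
    intro y
    obtain ⟨x, hx, hy⟩ := Set.mem_iUnion₂.1 (hrcov (Set.mem_univ y))
    rw [hf] at hx
    obtain ⟨n, rfl⟩ := hx
    exact ⟨n, subset_closure hy⟩
  have hWcov : ⋃ n, W n = Set.univ := by
    refine Set.eq_univ_of_forall fun y => ?_
    have hne := hcov' y
    refine Set.mem_iUnion.2 ⟨Nat.find hne, ?_, ?_⟩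
    · exact hVcl _ (Nat.find_spec hne)
    · intro hy
      obtain ⟨i, hi, hyc⟩ := Set.mem_iUnion₂.1 hy
      exact Nat.find_min hne (Finset.mem_range.1 hi) hyc
  have hWlf : LocallyFinite W := by
    intro y
    obtain ⟨x, hx, hy⟩ := Set.mem_iUnion₂.1 (hrcov (Set.mem_univ y))
    rw [hf] at hx
    obtain ⟨n, rfl⟩ := hx
    refine ⟨V (f n), isOpen_interior.mem_nhds hy, ?_⟩
    refine (Set.finite_Iic n).subset ?_
    rintro i ⟨z, hzW, hzV⟩
    by_contra hni
    have hni' : n < i := lt_of_not_ge (fun h => hni (Set.mem_Iic.2 h))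
    exact hzW.2 (Set.mem_biUnion (Finset.mem_range.2 hni') (subset_closure hzV))
  refine ⟨ULift ℕ, fun b => W b.down, fun b => hWo b.down, ?_, ?_, fun b => ⟨a (f b.down), Set.diff_subset⟩⟩
  · rw [← hWcov]
    exact Set.iUnion_congr_of_surjective ULift.down ULift.down_surjective fun _ => rfl
  · exact hWlf.comp_injective ULift.down_injective

end Aux

section Sigma
variable {X : Type*} [TopologicalSpace X]

lemma sigma_t4 (K : ℕ → Set X)
    (hmono : ∀ n, K n ⊆ K (n + 1)) (hcov : (⋃ n, K n) = Set.univ)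
    (hc : ∀ n, CompactSpace (K n) ∧ T2Space (K n))
    (hcl : ∀ A : Set X, IsClosed A ↔ ∀ n, IsClosed ((↑) ⁻¹' A : Set (K n))) :
    T1Space X ∧ NormalSpace X := by
  have hmono' : Monotone K := monotone_nat_of_le_succ hmono
  have hKcpt : ∀ n, IsCompact (K n) := fun n =>
    isCompact_iff_compactSpace.2 (hc n).1
  -- each K n is closed in X
  have hKclosed : ∀ n, IsClosed (K n) := by
    intro n
    rw [hcl]
    intro m
    haveI := (hc m).2
    have hcompact : IsCompact (K m ∩ K n) := by
      rcases le_total n m with h | h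
      · rw [Set.inter_eq_right.2 (hmono' h)]; exact hKcpt n
      · rw [Set.inter_eq_left.2 (hmono' h)]; exact hKcpt m
    have : IsCompact ((↑) ⁻¹' (K n) : Set (K m)) := by
      rw [Topology.IsEmbedding.subtypeVal.isCompact_iff,
        Subtype.image_preimage_coe]
      exact hcompact
    exact this.isClosed
  -- T1
  have hT1 : T1Space X := by
    refine ⟨fun x => ?_⟩
    rw [hcl]
    intro n
    haveI := (hc n).2
    have hsub : (((↑) ⁻¹' {x}) : Set (K n)).Subsingleton := by
      intro a ha b hb
      exact Subtype.ext (ha.trans hb.symm)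
    exact hsub.finite.isClosed
  -- openness criterion
  have hopen : ∀ U : Set X, (∀ n, IsOpen ((↑) ⁻¹' U : Set (K n))) → IsOpen U := by
    intro U h
    rw [← isClosed_compl_iff, hcl]
    intro n
    have := (h n).isClosed_compl
    rwa [← Set.preimage_compl] at this
  have hclsub : ∀ {n : ℕ} {S : Set X}, S ⊆ K n → closure S ⊆ K n :=
    fun {n S} h => closure_minimal h (hKclosed n)
  refine ⟨hT1, ⟨fun A B hA hB hAB => ?_⟩⟩
  -- the key separation step inside K m
  have step : ∀ (m : ℕ) (C D : Set X), IsClosed C → IsClosed D → C ⊆ K m → D ⊆ K m →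
      Disjoint C B → Disjoint D A → Disjoint C D →
      ∃ p : Set X × Set X, p.1 ⊆ K m ∧ p.2 ⊆ K m ∧
        IsOpen ((↑) ⁻¹' p.1 : Set (K m)) ∧ IsOpen ((↑) ⁻¹' p.2 : Set (K m)) ∧
        A ∩ K m ∪ C ⊆ p.1 ∧ B ∩ K m ∪ D ⊆ p.2 ∧
        Disjoint (closure p.1) (closure p.2) := by
    intro m C D hCc hDc hCK hDK hCB hDA hCD
    haveI := (hc m).1
    haveI := (hc m).2
    have hemb := (hKclosed m).isClosedEmbedding_subtypeVal
    set s : Set (K m) := (↑) ⁻¹' (A ∩ K m ∪ C) with hs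
    set t : Set (K m) := (↑) ⁻¹' (B ∩ K m ∪ D) with ht
    have hsc : IsClosed s := ((hA.inter (hKclosed m)).union hCc).preimage continuous_subtype_val
    have htc : IsClosed t := ((hB.inter (hKclosed m)).union hDc).preimage continuous_subtype_val
    have hst : Disjoint s t := by
      refine Disjoint.preimage _ ?_
      refine Set.disjoint_union_left.2 ⟨Set.disjoint_union_right.2 ⟨?_, ?_⟩,
        Set.disjoint_union_right.2 ⟨?_, ?_⟩⟩
      · exact hAB.mono Set.inter_subset_left Set.inter_subset_left
      · exact (hDA.symm).mono_left Set.inter_subset_left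
      · exact hCB.mono_right Set.inter_subset_left
      · exact hCD
    obtain ⟨U', V', hU'o, hV'o, hsU', htV', hdisj'⟩ := sep_closure_aux hsc htc hst
    refine ⟨((↑) '' U', (↑) '' V'), Subtype.coe_image_subset _ _,
      Subtype.coe_image_subset _ _, ?_, ?_, ?_, ?_, ?_⟩
    · rw [Set.preimage_image_eq _ Subtype.val_injective]; exact hU'o
    · rw [Set.preimage_image_eq _ Subtype.val_injective]; exact hV'o
    · intro x hx
      have hxK : x ∈ K m := by
        rcases hx with hx | hx
        · exact hx.2
        · exact hCK hx
      exact ⟨⟨x, hxK⟩, hsU' hx, rfl⟩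
    · intro x hx
      have hxK : x ∈ K m := by
        rcases hx with hx | hx
        · exact hx.2
        · exact hDK hx
      exact ⟨⟨x, hxK⟩, htV' hx, rfl⟩
    · rw [hemb.closure_image_eq, hemb.closure_image_eq]
      exact (Set.disjoint_image_iff Subtype.val_injective).2 hdisj'
  -- the invariant
  set Inv : ℕ → Set X × Set X → Prop := fun n p =>
    p.1 ⊆ K n ∧ p.2 ⊆ K n ∧
      IsOpen ((↑) ⁻¹' p.1 : Set (K n)) ∧ IsOpen ((↑) ⁻¹' p.2 : Set (K n)) ∧
      A ∩ K n ⊆ p.1 ∧ B ∩ K n ⊆ p.2 ∧ Disjoint (closure p.1) (closure p.2) with hInvDef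
  have istep : ∀ (n : ℕ) (p : Set X × Set X), Inv n p →
      ∃ q : Set X × Set X, Inv (n + 1) q ∧ closure p.1 ⊆ q.1 ∧ closure p.2 ⊆ q.2 := by
    intro n p hp
    obtain ⟨h1, h2, -, -, h5, h6, h7⟩ := hp
    have hCB : Disjoint (closure p.1) B := by
      rw [Set.disjoint_left]
      intro x hx hxB
      have hxK : x ∈ K n := hclsub h1 hx
      exact Set.disjoint_left.1 h7 hx (subset_closure (h6 ⟨hxB, hxK⟩))
    have hDA : Disjoint (closure p.2) A := by
      rw [Set.disjoint_left]
      intro x hx hxA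
      have hxK : x ∈ K n := hclsub h2 hx
      exact Set.disjoint_left.1 h7 (subset_closure (h5 ⟨hxA, hxK⟩)) hx
    obtain ⟨q, hq1, hq2, hq3, hq4, hq5, hq6, hq7⟩ :=
      step (n + 1) (closure p.1) (closure p.2) isClosed_closure isClosed_closure
        ((hclsub h1).trans (hmono n)) ((hclsub h2).trans (hmono n)) hCB hDA h7
    exact ⟨q, ⟨hq1, hq2, hq3, hq4,
        (Set.union_subset_iff.1 hq5).1, (Set.union_subset_iff.1 hq6).1, hq7⟩,
      (Set.union_subset_iff.1 hq5).2, (Set.union_subset_iff.1 hq6).2⟩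
  have base : ∃ p : Set X × Set X, Inv 0 p := by
    obtain ⟨q, hq1, hq2, hq3, hq4, hq5, hq6, hq7⟩ :=
      step 0 ∅ ∅ isClosed_empty isClosed_empty (Set.empty_subset _) (Set.empty_subset _)
        (Set.disjoint_left.2 fun x hx => hx.elim)
        (Set.disjoint_left.2 fun x hx => hx.elim)
        (Set.disjoint_left.2 fun x hx => hx.elim)
    rw [Set.union_empty] at hq5 hq6
    exact ⟨q, hq1, hq2, hq3, hq4, hq5, hq6, hq7⟩
  choose! F hF1 hF2 hF3 using istep
  set g : ℕ → Set X × Set X := fun n => Nat.rec base.choose F n with hg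
  have hgsucc : ∀ n, g (n + 1) = F n (g n) := fun n => rfl
  have hInv : ∀ n, Inv n (g n) := by
    intro n
    induction n with
    | zero => exact base.choose_spec
    | succ n ih => rw [hgsucc]; exact hF1 n (g n) ih
  have hgmono1 : ∀ n, (g n).1 ⊆ (g (n + 1)).1 := by
    intro n
    rw [hgsucc]
    exact subset_closure.trans (hF2 n (g n) (hInv n))
  have hgmono2 : ∀ n, (g n).2 ⊆ (g (n + 1)).2 := by
    intro n
    rw [hgsucc]
    exact subset_closure.trans (hF3 n (g n) (hInv n))
  have hgm1 : Monotone fun n => (g n).1 := monotone_nat_of_le_succ hgmono1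
  have hgm2 : Monotone fun n => (g n).2 := monotone_nat_of_le_succ hgmono2
  set U : Set X := ⋃ n, (g n).1 with hU
  set V : Set X := ⋃ n, (g n).2 with hV2
  -- openness of such unions
  have hopenU : ∀ (S : ℕ → Set X), Monotone S → (∀ n, S n ⊆ K n) →
      (∀ n, IsOpen ((↑) ⁻¹' S n : Set (K n))) → IsOpen (⋃ n, S n) := by
    intro S hSm hSK hSo
    apply hopen
    intro m
    have hEq : (⋃ n, S n) = ⋃ n, S (m + n) := by
      apply Set.Subset.antisymm
      · exact Set.iUnion_subset fun n => (hSm (Nat.le_add_left n m)).trans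
          (Set.subset_iUnion (fun k => S (m + k)) n)
      · exact Set.iUnion_subset fun n => Set.subset_iUnion S (m + n)
    rw [hEq, Set.preimage_iUnion]
    refine isOpen_iUnion fun n => ?_
    have hsub : K m ⊆ K (m + n) := hmono' (Nat.le_add_right m n)
    have : ((↑) ⁻¹' S (m + n) : Set (K m)) =
        (Set.inclusion hsub) ⁻¹' ((↑) ⁻¹' S (m + n) : Set (K (m + n))) := rfl
    rw [this]
    exact (hSo (m + n)).preimage (continuous_inclusion hsub)
  have hUo : IsOpen U := hopenU _ hgm1 (fun n => (hInv n).1) (fun n => (hInv n).2.2.1)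
  have hVo : IsOpen V := hopenU _ hgm2 (fun n => (hInv n).2.1) (fun n => (hInv n).2.2.2.1)
  refine ⟨U, V, hUo, hVo, ?_, ?_, ?_⟩
  · intro x hx
    have : x ∈ ⋃ n, K n := hcov ▸ Set.mem_univ x
    obtain ⟨n, hn⟩ := Set.mem_iUnion.1 this
    exact Set.mem_iUnion.2 ⟨n, (hInv n).2.2.2.2.1 ⟨hx, hn⟩⟩
  · intro x hx
    have : x ∈ ⋃ n, K n := hcov ▸ Set.mem_univ x
    obtain ⟨n, hn⟩ := Set.mem_iUnion.1 this
    exact Set.mem_iUnion.2 ⟨n, (hInv n).2.2.2.2.2.1 ⟨hx, hn⟩⟩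
  · rw [Set.disjoint_iUnion_left]
    intro n
    rw [Set.disjoint_iUnion_right]
    intro m
    have hd := (hInv (max n m)).2.2.2.2.2.2
    exact hd.mono ((hgm1 (le_max_left n m)).trans subset_closure)
      ((hgm2 (le_max_right n m)).trans subset_closure)

end Sigma

/-- A (possibly non-Hausdorff) topological space `X` has *property (σ)* with respect to a
sequence `K` of subsets if (σ1) the `K n` increase and cover `X`; (σ2) each `K n` with the
subspace topology is a compact Hausdorff space; (σ3) a set `A ⊆ X` is closed iff `A ∩ K n`
is closed in the subspace `K n` for every `n`. -/
def PropertySigmaWith (X : Type*) [TopologicalSpace X] (K : ℕ → Set X) : Prop :=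
  (∀ n, K n ⊆ K (n + 1)) ∧ (⋃ n, K n) = Set.univ ∧
    (∀ n, CompactSpace (K n) ∧ T2Space (K n)) ∧
    (∀ A : Set X, IsClosed A ↔ ∀ n, IsClosed ((↑) ⁻¹' A : Set (K n)))


/-- Every topological space having property (σ) with respect to some
sequence is a paracompact Hausdorff space. -/
theorem stmt_11 {X : Type*} [TopologicalSpace X]
    (h : ∃ K : ℕ → Set X, PropertySigmaWith X K) :
    ParacompactSpace X ∧ T2Space X := by
  obtain ⟨K, hmono, hcov, hc, hcl⟩ := h
  obtain ⟨hT1, hN⟩ := sigma_t4 K hmono hcov hc hcl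
  haveI := hT1
  haveI := hN
  haveI : T4Space X := ⟨⟩
  haveI : SigmaCompactSpace X :=
    ⟨⟨K, fun n => isCompact_iff_compactSpace.2 (hc n).1, hcov⟩⟩
  exact ⟨paracompact_of_regular_lindelof, inferInstance⟩
end

section
/- If a topological space X has property (σ) with respect to (K_n) and a topological space Y has property (σ) with respect to (L_n), then the product space X × Y (with the product topology) has property (σ) with respect to (K_n × L_n). In particular, a set A ⊆ X × Y is closed if and only if A ∩ (K_n × L_n) is closed in the subspace K_n × L_n for every n. -/
/-- In a compact Hausdorff subspace `S`, a compact `C ⊆ S` contained in an open `u`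
can be fattened to a relatively open `U` whose relative closure `C'` is compact and
still inside `u`. -/
private lemma sigma_shrink {X : Type*} [TopologicalSpace X] (S : Set X)
    [CompactSpace S] [T2Space S] {C : Set X} (hC : IsCompact C) (hCS : C ⊆ S)
    {u : Set X} (hu : IsOpen u) (hCu : C ⊆ u) :
    ∃ U C' : Set X, C ⊆ U ∧ U ⊆ C' ∧ C' ⊆ u ∧ C' ⊆ S ∧ IsCompact C' ∧
      ∃ O, IsOpen O ∧ U = O ∩ S := by
  have hemb : Topology.IsEmbedding (Subtype.val : S → X) := Topology.IsEmbedding.subtypeVal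
  set c : Set S := Subtype.val ⁻¹' C with hc_def
  have himg : Subtype.val '' c = C := by
    rw [hc_def, Subtype.image_preimage_coe, Set.inter_eq_self_of_subset_right hCS]
  have hcc : IsCompact c := hemb.isCompact_iff.mpr (himg ▸ hC)
  have hccl : IsClosed c := hcc.isClosed
  have huS : IsOpen (Subtype.val ⁻¹' u : Set S) := hu.preimage continuous_subtype_val
  have hcuS : c ⊆ Subtype.val ⁻¹' u := fun z hz => hCu hz
  obtain ⟨v, hv, hcv, hclv⟩ := normal_exists_closure_subset hccl huS hcuS
  refine ⟨Subtype.val '' v, Subtype.val '' (closure v), ?_, ?_, ?_, ?_, ?_, ?_⟩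
  · exact himg ▸ Set.image_mono hcv
  · exact Set.image_mono subset_closure
  · exact Set.image_subset_iff.mpr hclv
  · rintro _ ⟨z, _, rfl⟩; exact z.2
  · exact (isClosed_closure.isCompact).image continuous_subtype_val
  · obtain ⟨O, hO, hOv⟩ := isOpen_induced_iff.mp hv
    refine ⟨O, hO, ?_⟩
    rw [← hOv, Subtype.image_preimage_coe, Set.inter_comm]

private lemma sigma_closed_of_pieces {X Y : Type*} [TopologicalSpace X] [TopologicalSpace Y]
    (K : ℕ → Set X) (L : ℕ → Set Y)
    (hK : PropertySigmaWith X K) (hL : PropertySigmaWith Y L)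
    (A : Set (X × Y)) (h : ∀ n, IsClosed ((↑) ⁻¹' A : Set (K n ×ˢ L n))) :
    IsClosed A := by
  obtain ⟨hKs, hKcov, hKch, hKcl⟩ := hK
  obtain ⟨hLs, hLcov, hLch, hLcl⟩ := hL
  have hKm : Monotone K := monotone_nat_of_le_succ hKs
  have hLm : Monotone L := monotone_nat_of_le_succ hLs
  -- extract closed traces in `X × Y`
  choose F hFcl hFpre using fun n => isClosed_induced_iff.mp (h n)
  have hFA : ∀ n (z : X × Y) (hz : z ∈ K n ×ˢ L n), (z ∈ A ↔ z ∈ F n) := by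
    intro n z hz
    have := Set.ext_iff.mp (hFpre n) ⟨z, hz⟩
    simpa [Set.mem_preimage] using this.symm
  -- the inductive predicate
  set P : ℕ → Set X × Set Y → Prop := fun n p =>
    IsCompact p.1 ∧ p.1 ⊆ K n ∧ IsCompact p.2 ∧ p.2 ⊆ L n ∧ (p.1 ×ˢ p.2) ∩ A = ∅ with hP_def
  have step : ∀ n p, P n p → ∃ q : (Set X × Set Y) × (Set X × Set Y),
      P (n + 1) q.1 ∧ p.1 ⊆ q.2.1 ∧ q.2.1 ⊆ q.1.1 ∧ p.2 ⊆ q.2.2 ∧ q.2.2 ⊆ q.1.2 ∧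
      (∃ O, IsOpen O ∧ q.2.1 = O ∩ K (n + 1)) ∧ (∃ O, IsOpen O ∧ q.2.2 = O ∩ L (n + 1)) := by
    rintro n ⟨C, D⟩ ⟨hCc, hCK, hDc, hDL, hdisj⟩
    have hsub : C ×ˢ D ⊆ (F (n + 1))ᶜ := by
      rintro z ⟨hz1, hz2⟩ hzF
      have hzKL : z ∈ K (n + 1) ×ˢ L (n + 1) := ⟨hKs n (hCK hz1), hLs n (hDL hz2)⟩
      have hzA : z ∈ A := (hFA (n + 1) z hzKL).mpr hzF
      exact Set.eq_empty_iff_forall_notMem.mp hdisj z ⟨⟨hz1, hz2⟩, hzA⟩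
    obtain ⟨u, v, hu, hv, hCu, hDv, huv⟩ :=
      generalized_tube_lemma hCc hDc (hFcl (n + 1)).isOpen_compl hsub
    haveI := (hKch (n + 1)).1; haveI := (hKch (n + 1)).2
    haveI := (hLch (n + 1)).1; haveI := (hLch (n + 1)).2
    obtain ⟨U, C', hCU, hUC', hC'u, hC'K, hC'c, hUo⟩ :=
      sigma_shrink (K (n + 1)) hCc (fun z hz => hKs n (hCK hz)) hu hCu
    obtain ⟨V, D', hDV, hVD', hD'v, hD'L, hD'c, hVo⟩ :=
      sigma_shrink (L (n + 1)) hDc (fun z hz => hLs n (hDL hz)) hv hDv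
    refine ⟨⟨⟨C', D'⟩, ⟨U, V⟩⟩, ⟨hC'c, hC'K, hD'c, hD'L, ?_⟩, hCU, hUC', hDV, hVD', hUo, hVo⟩
    rw [Set.eq_empty_iff_forall_notMem]
    rintro z ⟨⟨hz1, hz2⟩, hzA⟩
    have hzKL : z ∈ K (n + 1) ×ˢ L (n + 1) := ⟨hC'K hz1, hD'L hz2⟩
    exact huv ⟨hC'u hz1, hD'v hz2⟩ ((hFA (n + 1) z hzKL).mp hzA)
  choose! step' hstep using step
  -- now prove `Aᶜ` is open
  rw [← isOpen_compl_iff, isOpen_iff_mem_nhds]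
  intro z hz
  obtain ⟨a, ha⟩ := Set.mem_iUnion.mp (hKcov.symm ▸ Set.mem_univ z.1)
  obtain ⟨b, hb⟩ := Set.mem_iUnion.mp (hLcov.symm ▸ Set.mem_univ z.2)
  set m : ℕ := max a b with hm_def
  have hxm : z.1 ∈ K m := hKm (le_max_left a b) ha
  have hym : z.2 ∈ L m := hLm (le_max_right a b) hb
  set seq : ℕ → Set X × Set Y :=
    fun n => Nat.rec (({z.1}, {z.2}) : Set X × Set Y) (fun k p => (step' (m + k) p).1) n
    with hseq_def
  have hP : ∀ k, P (m + k) (seq k) := by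
    intro k
    induction k with
    | zero =>
      refine ⟨isCompact_singleton, Set.singleton_subset_iff.mpr hxm, isCompact_singleton,
        Set.singleton_subset_iff.mpr hym, ?_⟩
      rw [Set.eq_empty_iff_forall_notMem]
      rintro w ⟨⟨hw1, hw2⟩, hwA⟩
      have hw1' : w.1 = z.1 := hw1
      have hw2' : w.2 = z.2 := hw2
      exact hz (Prod.ext hw1' hw2' ▸ hwA)
    | succ k ih => exact (hstep (m + k) (seq k) ih).1
  set U : ℕ → Set X := fun k => (step' (m + k) (seq k)).2.1 with hU_def
  set V : ℕ → Set Y := fun k => (step' (m + k) (seq k)).2.2 with hV_def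
  have hCU : ∀ k, (seq k).1 ⊆ U k := fun k => (hstep (m + k) (seq k) (hP k)).2.1
  have hUC : ∀ k, U k ⊆ (seq (k + 1)).1 := fun k => (hstep (m + k) (seq k) (hP k)).2.2.1
  have hDV : ∀ k, (seq k).2 ⊆ V k := fun k => (hstep (m + k) (seq k) (hP k)).2.2.2.1
  have hVD : ∀ k, V k ⊆ (seq (k + 1)).2 := fun k => (hstep (m + k) (seq k) (hP k)).2.2.2.2.1
  have hUo : ∀ k, ∃ O, IsOpen O ∧ U k = O ∩ K (m + k + 1) :=
    fun k => (hstep (m + k) (seq k) (hP k)).2.2.2.2.2.1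
  have hVo : ∀ k, ∃ O, IsOpen O ∧ V k = O ∩ L (m + k + 1) :=
    fun k => (hstep (m + k) (seq k) (hP k)).2.2.2.2.2.2
  have hUm : Monotone U := monotone_nat_of_le_succ fun k => (hUC k).trans (hCU (k + 1))
  have hVm : Monotone V := monotone_nat_of_le_succ fun k => (hVD k).trans (hDV (k + 1))
  set WX : Set X := ⋃ k, U k with hWX_def
  set WY : Set Y := ⋃ k, V k with hWY_def
  have hWXeq : ∀ n : ℕ, WX = ⋃ k, U (n + k) := by
    intro n
    refine Set.Subset.antisymm (Set.iUnion_subset fun j => ?_)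
      (Set.iUnion_subset fun j => Set.subset_iUnion U (n + j))
    exact Set.subset_iUnion_of_subset j (hUm (Nat.le_add_left j n))
  have hWYeq : ∀ n : ℕ, WY = ⋃ k, V (n + k) := by
    intro n
    refine Set.Subset.antisymm (Set.iUnion_subset fun j => ?_)
      (Set.iUnion_subset fun j => Set.subset_iUnion V (n + j))
    exact Set.subset_iUnion_of_subset j (hVm (Nat.le_add_left j n))
  have hWXopen : IsOpen WX := by
    rw [← isClosed_compl_iff, hKcl]
    intro n
    rw [Set.preimage_compl, isClosed_compl_iff]
    rw [hWXeq n, Set.preimage_iUnion]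
    refine isOpen_iUnion fun k => ?_
    obtain ⟨O, hO, hUO⟩ := hUo (n + k)
    have hle : n ≤ m + (n + k) + 1 := by omega
    have : (Subtype.val ⁻¹' U (n + k) : Set (K n)) = Subtype.val ⁻¹' O := by
      ext w
      simp only [Set.mem_preimage, hUO, Set.mem_inter_iff]
      exact ⟨fun h => h.1, fun h => ⟨h, hKm hle w.2⟩⟩
    rw [this]
    exact hO.preimage continuous_subtype_val
  have hWYopen : IsOpen WY := by
    rw [← isClosed_compl_iff, hLcl]
    intro n
    rw [Set.preimage_compl, isClosed_compl_iff]
    rw [hWYeq n, Set.preimage_iUnion]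
    refine isOpen_iUnion fun k => ?_
    obtain ⟨O, hO, hVO⟩ := hVo (n + k)
    have hle : n ≤ m + (n + k) + 1 := by omega
    have : (Subtype.val ⁻¹' V (n + k) : Set (L n)) = Subtype.val ⁻¹' O := by
      ext w
      simp only [Set.mem_preimage, hVO, Set.mem_inter_iff]
      exact ⟨fun h => h.1, fun h => ⟨h, hLm hle w.2⟩⟩
    rw [this]
    exact hO.preimage continuous_subtype_val
  have hzW : z ∈ WX ×ˢ WY := by
    constructor
    · exact Set.mem_iUnion.mpr ⟨0, hCU 0 rfl⟩
    · exact Set.mem_iUnion.mpr ⟨0, hDV 0 rfl⟩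
  have hWA : WX ×ˢ WY ⊆ Aᶜ := by
    rintro w ⟨hw1, hw2⟩
    obtain ⟨c1, hc1⟩ := Set.mem_iUnion.mp hw1
    obtain ⟨c2, hc2⟩ := Set.mem_iUnion.mp hw2
    set c : ℕ := max c1 c2
    have hw1' : w.1 ∈ (seq (c + 1)).1 := hUC c (hUm (le_max_left c1 c2) hc1)
    have hw2' : w.2 ∈ (seq (c + 1)).2 := hVD c (hVm (le_max_right c1 c2) hc2)
    intro hwA
    exact Set.eq_empty_iff_forall_notMem.mp (hP (c + 1)).2.2.2.2 w ⟨⟨hw1', hw2'⟩, hwA⟩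
  exact Filter.mem_of_superset ((hWXopen.prod hWYopen).mem_nhds hzW) hWA

/-- If `X` has property (σ) w.r.t. `K` and `Y` has property (σ) w.r.t.
`L`, then `X × Y` has property (σ) w.r.t. `fun n => K n ×ˢ L n`; in particular a set
`A ⊆ X × Y` is closed iff `A ∩ (K n ×ˢ L n)` is closed in the subspace `K n ×ˢ L n` for
every `n`. -/
theorem stmt_12 {X Y : Type*} [TopologicalSpace X] [TopologicalSpace Y]
    (K : ℕ → Set X) (L : ℕ → Set Y)
    (hK : PropertySigmaWith X K) (hL : PropertySigmaWith Y L) :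
    PropertySigmaWith (X × Y) (fun n => K n ×ˢ L n) ∧
      ∀ A : Set (X × Y), IsClosed A ↔ ∀ n, IsClosed ((↑) ⁻¹' A : Set (K n ×ˢ L n)) := by
  have hKm : Monotone K := monotone_nat_of_le_succ hK.1
  have hLm : Monotone L := monotone_nat_of_le_succ hL.1
  have hσ3 : ∀ A : Set (X × Y),
      IsClosed A ↔ ∀ n, IsClosed ((↑) ⁻¹' A : Set (K n ×ˢ L n)) := by
    intro A
    constructor
    · exact fun hA n => hA.preimage continuous_subtype_val
    · exact sigma_closed_of_pieces K L hK hL A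
  refine ⟨⟨?_, ?_, ?_, hσ3⟩, hσ3⟩
  · exact fun n => Set.prod_mono (hK.1 n) (hL.1 n)
  · rw [Set.eq_univ_iff_forall]
    intro z
    obtain ⟨a, ha⟩ := Set.mem_iUnion.mp (hK.2.1.symm ▸ Set.mem_univ z.1)
    obtain ⟨b, hb⟩ := Set.mem_iUnion.mp (hL.2.1.symm ▸ Set.mem_univ z.2)
    exact Set.mem_iUnion.mpr ⟨max a b,
      hKm (le_max_left a b) ha, hLm (le_max_right a b) hb⟩
  · intro n
    haveI := (hK.2.2.1 n).1; haveI := (hK.2.2.1 n).2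
    haveI := (hL.2.2.1 n).1; haveI := (hL.2.2.1 n).2
    constructor
    · exact isCompact_iff_compactSpace.mp
        ((isCompact_iff_compactSpace.mpr (hK.2.2.1 n).1).prod
          (isCompact_iff_compactSpace.mpr (hL.2.2.1 n).1))
    · exact (Homeomorph.Set.prod (K n) (L n)).isEmbedding.t2Space
end
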